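/- arXiv:1311.3323 — 6 statements merged into one kernel-verified Lean document; each statement's English description precedes it below -/
import Mathlib

section
/- Let U = [0,1] × [0,1] be the unit square and let Γ be a segment barrier for U with total length L. Then L ≥ 2. -/
open MeasureTheory Set

noncomputable section

/-- A point in the plane. -/
abbrev Pt : Type := EuclideanSpace ℝ (Fin 2)

/-- A line in ℝ² is a set {p + t • v : t ∈ ℝ} for some p, v with v ≠ 0. -/
def IsLine (l : Set Pt) : Prop :=
  ∃ p v : Pt, v ≠ 0 ∧ l = {q : Pt | ∃ t : ℝ, q = p + t • v}

/-- Γ is a barrier (opaque set) for C if every line meeting C also meets Γ. -/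
def IsBarrier (Γ C : Set Pt) : Prop :=
  ∀ l : Set Pt, IsLine l → (l ∩ C).Nonempty → (l ∩ Γ).Nonempty

/-- The closed unit square U = [0,1] × [0,1]. -/
def unitSquare : Set Pt := {p : Pt | p 0 ∈ Icc (0:ℝ) 1 ∧ p 1 ∈ Icc (0:ℝ) 1}

open Real intervalIntegral

lemma integral_abs_cos : ∫ θ in (0:ℝ)..(2*π), |Real.cos θ| = 4 := by
  have hic : ∀ u v : ℝ, IntervalIntegrable (fun x => |Real.cos x|) volume u v :=
    fun u v => (Real.continuous_cos.abs).intervalIntegrable u v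
  have h1 : ∫ θ in (0:ℝ)..(π/2), |Real.cos θ| = 1 := by
    rw [integral_congr (g := Real.cos) ?_, integral_cos]
    · simp
    · intro x hx
      rw [uIcc_of_le (by positivity)] at hx
      exact abs_of_nonneg (Real.cos_nonneg_of_mem_Icc ⟨by linarith [hx.1, pi_pos], hx.2⟩)
  have h2 : ∫ θ in (π/2:ℝ)..(3*π/2), |Real.cos θ| = 2 := by
    rw [integral_congr (g := fun x => -Real.cos x) ?_]
    · rw [intervalIntegral.integral_neg, integral_cos]
      have : Real.sin (3*π/2) = -1 := by
        have : (3*π/2 : ℝ) = π + π/2 := by ring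
        rw [this, Real.sin_add]; simp
      rw [this]; simp; norm_num
    · intro x hx
      rw [uIcc_of_le (by linarith [pi_pos])] at hx
      have : Real.cos x ≤ 0 :=
        Real.cos_nonpos_of_pi_div_two_le_of_le hx.1 (by linarith [hx.2])
      simpa using abs_of_nonpos this
  have h3 : ∫ θ in (3*π/2:ℝ)..(2*π), |Real.cos θ| = 1 := by
    rw [integral_congr (g := Real.cos) ?_, integral_cos]
    · have : Real.sin (3*π/2) = -1 := by
        have : (3*π/2 : ℝ) = π + π/2 := by ring
        rw [this, Real.sin_add]; simp
      rw [Real.sin_two_pi, this]; norm_num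
    · intro x hx
      rw [uIcc_of_le (by linarith [pi_pos])] at hx
      have hcx : Real.cos x = Real.cos (x - 2*π) := (Real.cos_sub_two_pi x).symm
      have hnn : 0 ≤ Real.cos x := by
        rw [hcx]
        exact Real.cos_nonneg_of_mem_Icc ⟨by linarith [hx.1], by linarith [hx.2, pi_pos]⟩
      exact abs_of_nonneg hnn
  have := integral_add_adjacent_intervals (hic 0 (π/2)) (hic (π/2) (3*π/2))
  have h4 := integral_add_adjacent_intervals (hic 0 (3*π/2)) (hic (3*π/2) (2*π))
  rw [← h4, ← this, h1, h2, h3]; norm_num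

lemma integral_abs_cos_sub (φ : ℝ) : ∫ θ in (0:ℝ)..(2*π), |Real.cos (θ - φ)| = 4 := by
  have hper : Function.Periodic (fun x => |Real.cos x|) (2*π) := fun x => by
    simp [Real.cos_periodic x]
  have h := intervalIntegral.integral_comp_sub_right (fun x => |Real.cos x|) φ (a := 0) (b := 2*π)
  rw [h]
  have h2 := hper.intervalIntegral_add_eq (0 - φ) 0
  rw [show (2:ℝ)*π - φ = 0 - φ + 2*π by ring, h2, zero_add]
  exact integral_abs_cos
open MeasureTheory Set Real intervalIntegral


lemma integral_abs_proj (d0 d1 : ℝ) :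
    ∫ θ in (0:ℝ)..(2*π), |d0 * Real.cos θ + d1 * Real.sin θ|
      = 4 * Real.sqrt (d0^2 + d1^2) := by
  by_cases hz : d0 = 0 ∧ d1 = 0
  · simp [hz.1, hz.2]
  · set z : ℂ := ⟨d0, d1⟩ with hzdef
    have hz0 : z ≠ 0 := by
      intro h
      exact hz ⟨congrArg Complex.re h, congrArg Complex.im h⟩
    set r : ℝ := ‖z‖ with hr
    have hr0 : 0 < r := norm_pos_iff.mpr hz0
    have hc : r * Real.cos z.arg = d0 := by
      rw [Complex.cos_arg hz0]; field_simp
      exact congrArg₂ (· * ·) hr rfl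
    have hs : r * Real.sin z.arg = d1 := by
      rw [Complex.sin_arg]; field_simp
      exact congrArg₂ (· * ·) hr rfl
    have hrs : r = Real.sqrt (d0^2 + d1^2) := by
      rw [hr, Complex.norm_def, Complex.normSq_mk]; ring_nf
    have key : ∀ θ : ℝ, |d0 * Real.cos θ + d1 * Real.sin θ| = r * |Real.cos (θ - z.arg)| := by
      intro θ
      rw [← hc, ← hs, Real.cos_sub]
      rw [show r * Real.cos z.arg * Real.cos θ + r * Real.sin z.arg * Real.sin θ
            = r * (Real.cos θ * Real.cos z.arg + Real.sin θ * Real.sin z.arg) by ring]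
      rw [abs_mul, abs_of_pos hr0]
    rw [integral_congr (g := fun θ => r * |Real.cos (θ - z.arg)|) (fun x _ => key x)]
    rw [intervalIntegral.integral_const_mul, integral_abs_cos_sub, hrs]
    ring
noncomputable section

def mkPt (x y : ℝ) : Pt := (WithLp.equiv 2 (Fin 2 → ℝ)).symm ![x, y]

@[simp] lemma mkPt_zero (x y : ℝ) : mkPt x y 0 = x := rfl
@[simp] lemma mkPt_one (x y : ℝ) : mkPt x y 1 = y := rfl

def proj (c s : ℝ) : Pt →ₗ[ℝ] ℝ where
  toFun p := p 0 * c + p 1 * s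
  map_add' p q := by simp [PiLp.add_apply]; ring
  map_smul' r p := by simp [PiLp.smul_apply]; ring

@[simp] lemma proj_apply (c s : ℝ) (p : Pt) : proj c s p = p 0 * c + p 1 * s := rfl

lemma convex_unitSquare : Convex ℝ unitSquare := by
  intro p hp q hq u v hu hv huv
  constructor
  · have := (convex_Icc (0:ℝ) 1) hp.1 hq.1 hu hv huv
    simpa [PiLp.add_apply, PiLp.smul_apply] using this
  · have := (convex_Icc (0:ℝ) 1) hp.2 hq.2 hu hv huv
    simpa [PiLp.add_apply, PiLp.smul_apply] using this

lemma image_seg (f : Pt →ₗ[ℝ] ℝ) (x y : Pt) :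
    ⇑f '' segment ℝ x y = segment ℝ (f x) (f y) := by
  ext z
  constructor
  · rintro ⟨p, ⟨u, v, hu, hv, huv, rfl⟩, rfl⟩
    exact ⟨u, v, hu, hv, huv, by simp [map_add, _root_.map_smul, smul_eq_mul]⟩
  · rintro ⟨u, v, hu, hv, huv, rfl⟩
    exact ⟨u • x + v • y, ⟨u, v, hu, hv, huv, rfl⟩,
      by simp [map_add, _root_.map_smul, smul_eq_mul]⟩

lemma stepA (a b : ℕ → Pt)
    (hbar : IsBarrier (⋃ i, segment ℝ (a i) (b i)) unitSquare)
    (c s : ℝ) (hcs : ¬ (c = 0 ∧ s = 0)) :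
    ENNReal.ofReal (|c| + |s|) ≤
      ∑' i, ENNReal.ofReal |(b i - a i) 0 * c + (b i - a i) 1 * s| := by
  set Γ : Set Pt := ⋃ i, segment ℝ (a i) (b i) with hΓ
  set ψ := proj c s with hψ
  -- projection of U is contained in projection of Γ
  have himg : ⇑ψ '' unitSquare ⊆ ⇑ψ '' Γ := by
    rintro x ⟨p, hp, rfl⟩
    set v : Pt := mkPt (-s) c with hv
    have hv0 : v ≠ 0 := by
      intro h
      apply hcs
      refine ⟨?_, ?_⟩
      · have h1 : v 1 = (0 : Pt) 1 := by rw [h]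
        simpa [hv] using h1
      · have h1 : v 0 = (0 : Pt) 0 := by rw [h]
        have h2 : -s = 0 := by simpa [hv] using h1
        linarith
    have hline : IsLine {q : Pt | ∃ t : ℝ, q = p + t • v} := ⟨p, v, hv0, rfl⟩
    have hne : ({q : Pt | ∃ t : ℝ, q = p + t • v} ∩ unitSquare).Nonempty :=
      ⟨p, ⟨0, by simp⟩, hp⟩
    obtain ⟨q, ⟨t, rfl⟩, hqΓ⟩ := hbar _ hline hne
    refine ⟨p + t • v, hqΓ, ?_⟩
    have hψv : ψ v = 0 := by simp [hψ, hv]; ring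
    rw [map_add, ψ.map_smul, hψv]
    simp
  -- corner points
  have hm : ∀ u : ℝ, (if 0 ≤ u then (0:ℝ) else 1) * u = min u 0 := by
    intro u; rcases le_or_gt 0 u with h | h
    · simp [h, min_eq_right h]
    · simp [not_le.mpr h, min_eq_left h.le]
  have hM : ∀ u : ℝ, (if 0 ≤ u then (1:ℝ) else 0) * u = max u 0 := by
    intro u; rcases le_or_gt 0 u with h | h
    · simp [h, max_eq_left h]
    · simp [not_le.mpr h, max_eq_right h.le]
  set pm : Pt := mkPt (if 0 ≤ c then 0 else 1) (if 0 ≤ s then 0 else 1) with hpmd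
  set pp : Pt := mkPt (if 0 ≤ c then 1 else 0) (if 0 ≤ s then 1 else 0) with hppd
  have hpm : pm ∈ unitSquare := by
    refine ⟨?_, ?_⟩ <;> simp [hpmd, unitSquare] <;> split_ifs <;> norm_num
  have hpp : pp ∈ unitSquare := by
    refine ⟨?_, ?_⟩ <;> simp [hppd, unitSquare] <;> split_ifs <;> norm_num
  have hψm : ψ pm = min c 0 + min s 0 := by
    rw [hpmd]
    have : ψ (mkPt (if 0 ≤ c then 0 else 1) (if 0 ≤ s then 0 else 1))
        = (if 0 ≤ c then (0:ℝ) else 1) * c + (if 0 ≤ s then (0:ℝ) else 1) * s := by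
      simp [hψ]
    rw [this, hm c, hm s]
  have hψp : ψ pp = max c 0 + max s 0 := by
    rw [hppd]
    have : ψ (mkPt (if 0 ≤ c then 1 else 0) (if 0 ≤ s then 1 else 0))
        = (if 0 ≤ c then (1:ℝ) else 0) * c + (if 0 ≤ s then (1:ℝ) else 0) * s := by
      simp [hψ]
    rw [this, hM c, hM s]
  have hle : min c 0 + min s 0 ≤ max c 0 + max s 0 :=
    add_le_add ((min_le_right _ _).trans (le_max_right _ _))
      ((min_le_right _ _).trans (le_max_right _ _))
  have hIcc : Icc (min c 0 + min s 0) (max c 0 + max s 0) ⊆ ⇑ψ '' unitSquare := by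
    rw [← hψm, ← hψp]
    intro x hx
    have hx' : x ∈ segment ℝ (ψ pm) (ψ pp) := by
      rw [segment_eq_uIcc, uIcc_of_le (by rw [hψm, hψp]; exact hle)]
      exact hx
    obtain ⟨u, v, hu, hv, huv, rfl⟩ := hx'
    exact ⟨u • pm + v • pp, convex_unitSquare hpm hpp hu hv huv,
      by simp [map_add, _root_.map_smul, smul_eq_mul]⟩
  calc ENNReal.ofReal (|c| + |s|)
      = volume (Icc (min c 0 + min s 0) (max c 0 + max s 0)) := by
        rw [Real.volume_Icc]
        congr 1
        have h1 : max c 0 - min c 0 = |c| := by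
          rw [max_sub_min_eq_abs]; simp
        have h2 : max s 0 - min s 0 = |s| := by
          rw [max_sub_min_eq_abs]; simp
        linarith
    _ ≤ volume (⇑ψ '' unitSquare) := measure_mono hIcc
    _ ≤ volume (⇑ψ '' Γ) := measure_mono himg
    _ = volume (⋃ i, ⇑ψ '' segment ℝ (a i) (b i)) := by rw [hΓ, image_iUnion]
    _ ≤ ∑' i, volume (⇑ψ '' segment ℝ (a i) (b i)) := measure_iUnion_le _
    _ = ∑' i, ENNReal.ofReal |(b i - a i) 0 * c + (b i - a i) 1 * s| := by
        refine tsum_congr fun i => ?_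
        rw [image_seg, segment_eq_uIcc, uIcc, Real.volume_Icc]
        congr 1
        rw [max_sub_min_eq_abs]
        have : ψ (b i) - ψ (a i) = (b i - a i) 0 * c + (b i - a i) 1 * s := by
          rw [← map_sub]; simp [hψ]
        rw [← this, abs_sub_comm]

/-- any segment barrier for the unit square has total length at least 2. -/
theorem segment_barrier_unit_square_length_ge_two
    (a b : ℕ → Pt) (hab : ∀ i, a i ≠ b i)
    (hbar : IsBarrier (⋃ i, segment ℝ (a i) (b i)) unitSquare)
    (hsum : Summable fun i => ‖b i - a i‖) :
    (2 : ℝ) ≤ ∑' i, ‖b i - a i‖ := by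
  classical
  set F : ℕ → ℝ → ENNReal := fun i θ =>
    ENNReal.ofReal |(b i - a i) 0 * Real.cos θ + (b i - a i) 1 * Real.sin θ| with hF
  have h2pi : (0:ℝ) ≤ 2*π := by positivity
  have hcont : ∀ d0 d1 : ℝ, Continuous fun θ : ℝ => |d0 * Real.cos θ + d1 * Real.sin θ| :=
    fun d0 d1 => ((continuous_const.mul Real.continuous_cos).add
      (continuous_const.mul Real.continuous_sin)).abs
  have hA : ∀ θ : ℝ, ENNReal.ofReal (|Real.cos θ| + |Real.sin θ|) ≤ ∑' i, F i θ := by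
    intro θ
    refine stepA a b hbar (Real.cos θ) (Real.sin θ) ?_
    rintro ⟨h1, h2⟩
    have h3 := Real.sin_sq_add_cos_sq θ
    rw [h1, h2] at h3
    norm_num at h3
  -- value of each lintegral
  have hFi : ∀ i, ∫⁻ θ in Ioc (0:ℝ) (2*π), F i θ = ENNReal.ofReal (4 * ‖b i - a i‖) := by
    intro i
    have hint : IntegrableOn
        (fun θ => |(b i - a i) 0 * Real.cos θ + (b i - a i) 1 * Real.sin θ|)
        (Ioc (0:ℝ) (2*π)) volume := (hcont _ _).integrableOn_Ioc
    rw [hF]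
    rw [← ofReal_integral_eq_lintegral_ofReal hint
      (Filter.Eventually.of_forall fun θ => abs_nonneg _)]
    rw [← intervalIntegral.integral_of_le h2pi, integral_abs_proj]
    congr 2
    rw [EuclideanSpace.norm_eq]
    simp [Fin.sum_univ_two, Real.norm_eq_abs, sq_abs]
  -- lower bound for the lintegral of the sum
  have h8 : ENNReal.ofReal 8 ≤ ∫⁻ θ in Ioc (0:ℝ) (2*π), ∑' i, F i θ := by
    have hintc : IntegrableOn (fun θ : ℝ => |Real.cos θ| + |Real.sin θ|)
        (Ioc (0:ℝ) (2*π)) volume :=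
      (Real.continuous_cos.abs.add Real.continuous_sin.abs).integrableOn_Ioc
    have heq : ENNReal.ofReal 8
        = ∫⁻ θ in Ioc (0:ℝ) (2*π), ENNReal.ofReal (|Real.cos θ| + |Real.sin θ|) := by
      rw [← ofReal_integral_eq_lintegral_ofReal hintc
        (Filter.Eventually.of_forall fun θ => by positivity)]
      congr 1
      rw [← intervalIntegral.integral_of_le h2pi]
      have hs : ∫ θ in (0:ℝ)..(2*π), |Real.sin θ| = 4 := by
        rw [intervalIntegral.integral_congr (g := fun θ => |Real.cos (θ - π/2)|) ?_]
        · exact integral_abs_cos_sub _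
        · intro x _
          show |Real.sin x| = |Real.cos (x - π/2)|
          rw [Real.cos_sub, Real.cos_pi_div_two, Real.sin_pi_div_two]
          norm_num
      rw [intervalIntegral.integral_add
        (Real.continuous_cos.abs.intervalIntegrable _ _)
        (Real.continuous_sin.abs.intervalIntegrable _ _), integral_abs_cos, hs]
      norm_num
    rw [heq]
    exact lintegral_mono fun θ => hA θ
  have hswap : ∫⁻ θ in Ioc (0:ℝ) (2*π), ∑' i, F i θ
      = ∑' i, ∫⁻ θ in Ioc (0:ℝ) (2*π), F i θ :=
    lintegral_tsum fun i => ((hcont _ _).measurable.ennreal_ofReal).aemeasurable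
  rw [hswap] at h8
  have h8' : ENNReal.ofReal 8 ≤ ENNReal.ofReal (∑' i, 4 * ‖b i - a i‖) := by
    rw [ENNReal.ofReal_tsum_of_nonneg (fun i => by positivity) (hsum.mul_left 4)]
    rw [← tsum_congr hFi] at *
    exact h8
  have hL : (8:ℝ) ≤ ∑' i, 4 * ‖b i - a i‖ := by
    have hnn : 0 ≤ ∑' i, 4 * ‖b i - a i‖ := tsum_nonneg fun i => by positivity
    exact (ENNReal.ofReal_le_ofReal_iff hnn).mp h8'
  rw [tsum_mul_left] at hL
  linarith
end
end
end

section
/- Let C ⊆ ℝ² be a convex body (a compact convex set with nonempty interior) and let Γ be a segment barrier for C given by segments [aᵢ, bᵢ]. Then for every unit vector u ∈ ℝ², the total length of the projections of the segments onto the direction u is at least the width of C in direction u; that is, Σᵢ |⟨bᵢ − aᵢ, u⟩| ≥ sup_{x ∈ C} ⟨x, u⟩ − inf_{x ∈ C} ⟨x, u⟩. -/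
open MeasureTheory Set

noncomputable section

/-- for a segment barrier of a convex body C, the total projection length of
the segments onto any unit direction u is at least the width of C in direction u. -/
theorem segment_barrier_projection_ge_width
    (C : Set Pt) (hCcomp : IsCompact C) (hCconv : Convex ℝ C)
    (hCint : (interior C).Nonempty)
    (a b : ℕ → Pt) (hab : ∀ i, a i ≠ b i)
    (hbar : IsBarrier (⋃ i, segment ℝ (a i) (b i)) C)
    (hsum : Summable fun i => ‖b i - a i‖)
    (u : Pt) (hu : ‖u‖ = 1) :
    sSup ((fun x : Pt => (inner ℝ x u : ℝ)) '' C) - sInf ((fun x : Pt => (inner ℝ x u : ℝ)) '' C)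
      ≤ ∑' i, |(inner ℝ (b i - a i) u : ℝ)| := by
  -- summability of the projections
  have habs : Summable fun i => |(inner ℝ (b i - a i) u : ℝ)| := by
    refine hsum.of_nonneg_of_le (fun i => abs_nonneg _) (fun i => ?_)
    calc |(inner ℝ (b i - a i) u : ℝ)| ≤ ‖b i - a i‖ * ‖u‖ := abs_real_inner_le_norm _ _
      _ = ‖b i - a i‖ := by rw [hu, mul_one]
  have htsum_nonneg : (0:ℝ) ≤ ∑' i, |(inner ℝ (b i - a i) u : ℝ)| :=
    tsum_nonneg fun i => abs_nonneg _
  set f : Pt →L[ℝ] ℝ := innerSL ℝ u with hfdef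
  have hfx : ∀ x : Pt, f x = (inner ℝ x u : ℝ) := fun x => (real_inner_comm u x).symm ▸ rfl
  have himg : (fun x : Pt => (inner ℝ x u : ℝ)) '' C = f '' C := by
    apply image_congr; intro x _; rw [hfx]
  rw [himg]
  set M := sSup (f '' C) with hM
  set m := sInf (f '' C) with hm
  rcases le_or_gt (M - m) 0 with hle | hlt
  · linarith
  -- C nonempty, image compact
  have hCne : C.Nonempty := hCint.mono interior_subset
  have hKcomp : IsCompact (f '' C) := hCcomp.image f.continuous
  have hKne : (f '' C).Nonempty := hCne.image _
  have hMmem : M ∈ f '' C := hKcomp.sSup_mem hKne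
  have hmmem : m ∈ f '' C := hKcomp.sInf_mem hKne
  have hKconv : Convex ℝ (f '' C) := hCconv.linear_image f.toLinearMap
  have hIoo : Ioo m M ⊆ f '' C := fun t ht =>
    hKconv.ordConnected.out hmmem hMmem ⟨ht.1.le, ht.2.le⟩
  -- the perpendicular direction
  set v : Pt := (WithLp.equiv 2 (Fin 2 → ℝ)).symm ![-(u 1), u 0] with hv
  have hfv : f v = 0 := by
    simp only [hfdef, innerSL_apply_apply, hv]
    simp [PiLp.inner_apply, Fin.sum_univ_two, RCLike.inner_apply]
    ring
  have hvnorm : ‖v‖ = 1 := by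
    rw [← hu]
    simp only [hv, EuclideanSpace.norm_eq, Fin.sum_univ_two]
    congr 1
    simp [WithLp.equiv_symm_apply]
    ring
  have hvne : v ≠ 0 := by
    intro h; rw [h, norm_zero] at hvnorm; exact one_ne_zero hvnorm.symm
  -- the covering
  have hcover : Ioo m M ⊆ ⋃ i, f '' segment ℝ (a i) (b i) := by
    intro t ht
    obtain ⟨z, hzC, hfz⟩ := hIoo ht
    have hline : IsLine {q : Pt | ∃ s : ℝ, q = z + s • v} := ⟨z, v, hvne, rfl⟩
    have hmeet : ({q : Pt | ∃ s : ℝ, q = z + s • v} ∩ C).Nonempty :=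
      ⟨z, ⟨0, by simp⟩, hzC⟩
    obtain ⟨w, ⟨s, hws⟩, hwΓ⟩ := hbar _ hline hmeet
    obtain ⟨i, hwi⟩ := mem_iUnion.mp hwΓ
    have hfw : f w = t := by
      rw [hws, map_add, f.map_smul, hfv, smul_zero, add_zero, hfz]
    exact mem_iUnion.mpr ⟨i, w, hwi, hfw⟩
  -- measure computation
  have hseg : ∀ i, volume (f '' segment ℝ (a i) (b i))
      = ENNReal.ofReal |(inner ℝ (b i - a i) u : ℝ)| := by
    intro i
    have h1 : f '' segment ℝ (a i) (b i) = segment ℝ (f (a i)) (f (b i)) :=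
      image_segment ℝ f.toLinearMap.toAffineMap (a i) (b i)
    rw [h1, segment_eq_uIcc, Real.volume_interval]
    congr 1
    rw [← map_sub, hfx]
  have key : ENNReal.ofReal (M - m)
      ≤ ENNReal.ofReal (∑' i, |(inner ℝ (b i - a i) u : ℝ)|) := by
    calc ENNReal.ofReal (M - m) = volume (Ioo m M) := (Real.volume_Ioo).symm
      _ ≤ volume (⋃ i, f '' segment ℝ (a i) (b i)) := measure_mono hcover
      _ ≤ ∑' i, volume (f '' segment ℝ (a i) (b i)) := measure_iUnion_le _
      _ = ∑' i, ENNReal.ofReal |(inner ℝ (b i - a i) u : ℝ)| := tsum_congr hseg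
      _ = ENNReal.ofReal (∑' i, |(inner ℝ (b i - a i) u : ℝ)|) :=
          (ENNReal.ofReal_tsum_of_nonneg (fun i => abs_nonneg _) habs).symm
  exact (ENNReal.ofReal_le_ofReal_iff htsum_nonneg).mp key
end
end

section
/- Let ℓ₁, …, ℓₙ be nonnegative real numbers and θ₁, …, θₙ real numbers (angles). If Σᵢ ℓᵢ |cos θᵢ| ≥ √2 and Σᵢ ℓᵢ |sin θᵢ| ≥ √2, then Σᵢ ℓᵢ ≥ 2. -/
/-- if nonnegative lengths ℓᵢ with angles θᵢ satisfy the two diagonal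
blocking conditions Σ ℓᵢ|cos θᵢ| ≥ √2 and Σ ℓᵢ|sin θᵢ| ≥ √2, then Σ ℓᵢ ≥ 2. -/
theorem ozkan_inequality (n : ℕ) (ℓ θ : Fin n → ℝ) (hℓ : ∀ i, 0 ≤ ℓ i)
    (hcos : Real.sqrt 2 ≤ ∑ i, ℓ i * |Real.cos (θ i)|)
    (hsin : Real.sqrt 2 ≤ ∑ i, ℓ i * |Real.sin (θ i)|) :
    2 ≤ ∑ i, ℓ i := by
  have hs2 : Real.sqrt 2 ^ 2 = 2 := Real.sq_sqrt (by norm_num)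
  have hspos : (0:ℝ) < Real.sqrt 2 := Real.sqrt_pos.mpr (by norm_num)
  have key : ∀ x : ℝ, |Real.cos x| + |Real.sin x| ≤ Real.sqrt 2 := by
    intro x
    nlinarith [Real.sin_sq_add_cos_sq x, sq_abs (Real.cos x), sq_abs (Real.sin x),
      sq_nonneg (|Real.cos x| - |Real.sin x|), abs_nonneg (Real.cos x),
      abs_nonneg (Real.sin x), hspos, hs2]
  have hsum : 2 * Real.sqrt 2 ≤ Real.sqrt 2 * ∑ i, ℓ i := by
    have h1 : (∑ i, ℓ i * |Real.cos (θ i)|) + ∑ i, ℓ i * |Real.sin (θ i)|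
        ≤ Real.sqrt 2 * ∑ i, ℓ i := by
      rw [← Finset.sum_add_distrib, Finset.mul_sum]
      apply Finset.sum_le_sum
      intro i _
      have := key (θ i)
      nlinarith [hℓ i]
    linarith
  have := (mul_le_mul_iff_right₀ hspos).mp (by linarith [hsum] : Real.sqrt 2 * 2 ≤ Real.sqrt 2 * ∑ i, ℓ i)
  linarith
end

section
/- With the setup parameters δ = 10⁻¹² and sin φ = 10⁻⁴, let Γ be a segment barrier for the unit square U with total length L ≤ 2 + δ, partitioned into the almost horizontal segments X, the almost vertical segments Y, and the remaining segments Z. Then 1 − (7/2)·10⁻⁴ ≤ |X| ≤ 1 + (3/2)·10⁻⁴ and 1 − (7/2)·10⁻⁴ ≤ |Y| ≤ 1 + (3/2)·10⁻⁴ (i.e., 1 − (7/2) sin φ ≤ |X|, |Y| ≤ 1 + (3/2) sin φ). -/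
open MeasureTheory Set

noncomputable section

/-- A segment [a, b] is almost horizontal if its direction makes angle at most
φ = arcsin 10⁻⁴ with the x-axis, i.e. |(b − a)₂| ≤ 10⁻⁴ ‖b − a‖. -/
def AlmostHorizontal (a b : Pt) : Prop := |(b - a) 1| ≤ 10 ^ (-4 : ℤ) * ‖b - a‖

/-- A segment [a, b] is almost vertical if its direction makes angle at most
φ = arcsin 10⁻⁴ with the y-axis, i.e. |(b − a)₁| ≤ 10⁻⁴ ‖b − a‖. -/
def AlmostVertical (a b : Pt) : Prop := |(b - a) 0| ≤ 10 ^ (-4 : ℤ) * ‖b - a‖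

lemma max_abs_eq (p q : ℝ) : max |p| |q| = (|p + q| + |p - q|) / 2 := by
  rcases le_total |p| |q| with h | h
  · have h1 := (abs_le.mp h).1
    have h2 := (abs_le.mp h).2
    rw [max_eq_right h]
    rcases le_total 0 q with hq | hq
    · rw [abs_of_nonneg hq] at h1 h2 ⊢
      rw [abs_of_nonneg (by linarith : (0:ℝ) ≤ p + q), abs_of_nonpos (by linarith : p - q ≤ 0)]
      ring
    · rw [abs_of_nonpos hq] at h1 h2 ⊢
      rw [abs_of_nonpos (by linarith : p + q ≤ 0), abs_of_nonneg (by linarith : (0:ℝ) ≤ p - q)]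
      ring
  · have h1 := (abs_le.mp h).1
    have h2 := (abs_le.mp h).2
    rw [max_eq_left h]
    rcases le_total 0 p with hp | hp
    · rw [abs_of_nonneg hp] at h1 h2 ⊢
      rw [abs_of_nonneg (by linarith : (0:ℝ) ≤ p + q), abs_of_nonneg (by linarith : (0:ℝ) ≤ p - q)]
      ring
    · rw [abs_of_nonpos hp] at h1 h2 ⊢
      rw [abs_of_nonpos (by linarith : p + q ≤ 0), abs_of_nonpos (by linarith : p - q ≤ 0)]
      ring


lemma coord_le_norm (d : Pt) (j : Fin 2) : |d j| ≤ ‖d‖ := by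
  rw [EuclideanSpace.norm_eq, Fin.sum_univ_two,
    ← Real.sqrt_sq (abs_nonneg (d j)), ← Real.norm_eq_abs]
  apply Real.sqrt_le_sqrt
  have e0 : ‖d 0‖ = |d 0| := Real.norm_eq_abs _
  have e1 : ‖d 1‖ = |d 1| := Real.norm_eq_abs _
  fin_cases j
  · show ‖d 0‖^2 ≤ ‖d 0‖^2 + ‖d 1‖^2
    nlinarith [sq_nonneg ‖d 1‖]
  · show ‖d 1‖^2 ≤ ‖d 0‖^2 + ‖d 1‖^2
    nlinarith [sq_nonneg ‖d 0‖]


lemma norm_sq_eq (d : Pt) : ‖d‖^2 = |d 0|^2 + |d 1|^2 := by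
  rw [EuclideanSpace.norm_eq, Fin.sum_univ_two, Real.sq_sqrt (by positivity)]
  rw [Real.norm_eq_abs, Real.norm_eq_abs]

lemma proj_bound (a b : ℕ → Pt)
    (hbar : IsBarrier (⋃ i, segment ℝ (a i) (b i)) unitSquare)
    (hsum : Summable fun i => ‖b i - a i‖)
    (c₀ c₁ : ℝ) (hc : |c₀| + |c₁| > 0) :
    |c₀| + |c₁| ≤ ∑' i, |c₀ * (b i - a i) 0 + c₁ * (b i - a i) 1| := by
  set g : Pt → ℝ := fun p => c₀ * p 0 + c₁ * p 1 with hg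
  set lo : ℝ := min c₀ 0 + min c₁ 0 with hlo
  set hi : ℝ := max c₀ 0 + max c₁ 0 with hhi
  have hwid : hi - lo = |c₀| + |c₁| := by
    rw [hhi, hlo, show max c₀ 0 + max c₁ 0 - (min c₀ 0 + min c₁ 0)
      = (max c₀ 0 - min c₀ 0) + (max c₁ 0 - min c₁ 0) by ring,
      max_sub_min_eq_abs, max_sub_min_eq_abs]
    simp [abs_sub_comm]
  -- covering
  have hcov : Icc lo hi ⊆ ⋃ i, Icc (min (g (a i)) (g (b i))) (max (g (a i)) (g (b i))) := by
    intro t ht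
    set u : ℝ := (t - lo) / (hi - lo) with hu
    have hu0 : 0 ≤ u := div_nonneg (by linarith [ht.1]) (by linarith [hwid])
    have hu1 : u ≤ 1 := by
      rw [hu, div_le_one (by linarith [hwid])]; linarith [ht.2]
    set q : ℝ → ℝ := fun c => if 0 ≤ c then u else 1 - u with hq
    set p : Pt := (WithLp.equiv 2 (Fin 2 → ℝ)).symm ![q c₀, q c₁] with hp
    have hp0 : p 0 = q c₀ := by rw [hp, WithLp.equiv_symm_apply, PiLp.toLp_apply]; rfl
    have hp1 : p 1 = q c₁ := by rw [hp, WithLp.equiv_symm_apply, PiLp.toLp_apply]; rfl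
    have hqc : ∀ c : ℝ, c * q c = min c 0 + u * |c| := by
      intro c; rw [hq]; dsimp only; rcases le_or_gt 0 c with h | h
      · simp [h, abs_of_nonneg h, min_eq_right h]; ring
      · simp [not_le.2 h, abs_of_neg h, min_eq_left h.le]; ring
    have hgp : c₀ * p 0 + c₁ * p 1 = t := by
      rw [hp0, hp1, hqc c₀, hqc c₁,
        show min c₀ 0 + u * |c₀| + (min c₁ 0 + u * |c₁|) = lo + u * (|c₀| + |c₁|) by
          rw [hlo]; ring,
        hu, hwid, div_mul_cancel₀ _ (ne_of_gt hc)]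
      ring
    have hq01 : ∀ c : ℝ, q c ∈ Icc (0:ℝ) 1 := by
      intro c; rw [hq]; dsimp only; split <;> constructor <;> linarith
    have hpU : p ∈ unitSquare :=
      ⟨by rw [hp0]; exact hq01 c₀, by rw [hp1]; exact hq01 c₁⟩
    set v : Pt := (WithLp.equiv 2 (Fin 2 → ℝ)).symm ![c₁, -c₀] with hv
    have hv0 : v 0 = c₁ := by rw [hv, WithLp.equiv_symm_apply, PiLp.toLp_apply]; rfl
    have hv1 : v 1 = -c₀ := by rw [hv, WithLp.equiv_symm_apply, PiLp.toLp_apply]; rfl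
    have hvne : v ≠ 0 := by
      intro h
      have h0 : c₁ = 0 := by rw [← hv0, h]; rfl
      have h1 : -c₀ = 0 := by rw [← hv1, h]; rfl
      have h2 : c₀ = 0 := by linarith
      rw [h0, h2] at hc; simp at hc
    set l : Set Pt := {z : Pt | ∃ s : ℝ, z = p + s • v} with hl
    have hline : IsLine l := ⟨p, v, hvne, rfl⟩
    have hmeet : (l ∩ unitSquare).Nonempty := ⟨p, ⟨0, by simp⟩, hpU⟩
    obtain ⟨z, hzl, hzΓ⟩ := hbar l hline hmeet
    obtain ⟨s, rfl⟩ := hzl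
    have hgz : g (p + s • v) = t := by
      rw [hg]; dsimp only
      simp only [PiLp.add_apply, PiLp.smul_apply, smul_eq_mul, hv0, hv1]
      linear_combination hgp
    obtain ⟨i, hzi⟩ := mem_iUnion.mp hzΓ
    refine mem_iUnion.mpr ⟨i, ?_⟩
    obtain ⟨α, β, hα, hβ, hαβ, hcomb⟩ := hzi
    have hgcomb : g (p + s • v) = α * g (a i) + β * g (b i) := by
      rw [← hcomb, hg]; dsimp only
      simp only [PiLp.add_apply, PiLp.smul_apply, smul_eq_mul]
      ring
    rw [← hgz, hgcomb]
    have hm1 : α * min (g (a i)) (g (b i)) ≤ α * g (a i) :=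
      mul_le_mul_of_nonneg_left (min_le_left _ _) hα
    have hm2 : β * min (g (a i)) (g (b i)) ≤ β * g (b i) :=
      mul_le_mul_of_nonneg_left (min_le_right _ _) hβ
    have hM1 : α * g (a i) ≤ α * max (g (a i)) (g (b i)) :=
      mul_le_mul_of_nonneg_left (le_max_left _ _) hα
    have hM2 : β * g (b i) ≤ β * max (g (a i)) (g (b i)) :=
      mul_le_mul_of_nonneg_left (le_max_right _ _) hβ
    have hmm : α * min (g (a i)) (g (b i)) + β * min (g (a i)) (g (b i))
        = min (g (a i)) (g (b i)) := by rw [← add_mul, hαβ, one_mul]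
    have hMM : α * max (g (a i)) (g (b i)) + β * max (g (a i)) (g (b i))
        = max (g (a i)) (g (b i)) := by rw [← add_mul, hαβ, one_mul]
    exact ⟨by linarith, by linarith⟩
  -- measure
  have hbd : ∀ i, |c₀ * (b i - a i) 0 + c₁ * (b i - a i) 1| ≤ (|c₀| + |c₁|) * ‖b i - a i‖ := by
    intro i
    have key : ∀ j : Fin 2, |(b i - a i) j| ≤ ‖b i - a i‖ := by
      intro j
      have := EuclideanSpace.norm_eq (b i - a i)
      rw [this, Fin.sum_univ_two]
      rw [← Real.sqrt_sq (abs_nonneg ((b i - a i) j)), ← Real.norm_eq_abs]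
      apply Real.sqrt_le_sqrt
      fin_cases j <;> simp <;> nlinarith [sq_nonneg ‖(b i - a i) 0‖, sq_nonneg ‖(b i - a i) 1‖,
        Real.norm_eq_abs ((b i - a i) 0), Real.norm_eq_abs ((b i - a i) 1)]
    calc |c₀ * (b i - a i) 0 + c₁ * (b i - a i) 1|
        ≤ |c₀ * (b i - a i) 0| + |c₁ * (b i - a i) 1| := abs_add_le _ _
      _ = |c₀| * |(b i - a i) 0| + |c₁| * |(b i - a i) 1| := by rw [abs_mul, abs_mul]
      _ ≤ |c₀| * ‖b i - a i‖ + |c₁| * ‖b i - a i‖ :=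
          add_le_add (mul_le_mul_of_nonneg_left (key 0) (abs_nonneg c₀))
            (mul_le_mul_of_nonneg_left (key 1) (abs_nonneg c₁))
      _ = (|c₀| + |c₁|) * ‖b i - a i‖ := by ring
  have hsumw : Summable fun i => |c₀ * (b i - a i) 0 + c₁ * (b i - a i) 1| :=
    Summable.of_nonneg_of_le (fun i => abs_nonneg _) hbd (hsum.mul_left _)
  have hm : volume (Icc lo hi) ≤
      ∑' i, volume (Icc (min (g (a i)) (g (b i))) (max (g (a i)) (g (b i)))) :=
    le_trans (measure_mono hcov) (measure_iUnion_le _)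
  rw [Real.volume_Icc, hwid] at hm
  have heq : ∀ i, volume (Icc (min (g (a i)) (g (b i))) (max (g (a i)) (g (b i))))
      = ENNReal.ofReal (|c₀ * (b i - a i) 0 + c₁ * (b i - a i) 1|) := by
    intro i
    rw [Real.volume_Icc, max_sub_min_eq_abs]
    congr 1
    rw [hg]; dsimp only
    simp only [PiLp.sub_apply]
    congr 1; ring
  simp_rw [heq] at hm
  rw [← ENNReal.ofReal_tsum_of_nonneg (fun i => abs_nonneg _) hsumw] at hm
  exact (ENNReal.ofReal_le_ofReal_iff (tsum_nonneg fun i => abs_nonneg _)).mp hm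

set_option maxHeartbeats 1000000 in
/-- Lemma 4: for a segment barrier of the unit square of total length at
most 2 + δ (δ = 10⁻¹², sin φ = 10⁻⁴), the total length |X| of almost horizontal segments
and the total length |Y| of almost vertical segments satisfy
1 − (7/2) sin φ ≤ |X|, |Y| ≤ 1 + (3/2) sin φ. -/
theorem X_Y_length_close_to_one
    (a b : ℕ → Pt) (hab : ∀ i, a i ≠ b i)
    (hbar : IsBarrier (⋃ i, segment ℝ (a i) (b i)) unitSquare)
    (hsum : Summable fun i => ‖b i - a i‖)
    (hL : ∑' i, ‖b i - a i‖ ≤ 2 + 10 ^ (-12 : ℤ)) :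
    (1 - (7/2) * 10 ^ (-4 : ℤ) ≤
        ∑' i : {j : ℕ // AlmostHorizontal (a j) (b j)}, ‖b i.1 - a i.1‖) ∧
    (∑' i : {j : ℕ // AlmostHorizontal (a j) (b j)}, ‖b i.1 - a i.1‖
        ≤ 1 + (3/2) * 10 ^ (-4 : ℤ)) ∧
    (1 - (7/2) * 10 ^ (-4 : ℤ) ≤
        ∑' i : {j : ℕ // AlmostVertical (a j) (b j)}, ‖b i.1 - a i.1‖) ∧
    (∑' i : {j : ℕ // AlmostVertical (a j) (b j)}, ‖b i.1 - a i.1‖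
        ≤ 1 + (3/2) * 10 ^ (-4 : ℤ)) := by
  have hs4 : ((10:ℝ) ^ (-4 : ℤ)) = 1/10000 := by norm_num
  have hs12 : ((10:ℝ) ^ (-12 : ℤ)) = 1/1000000000000 := by norm_num
  set ℓ : ℕ → ℝ := fun i => ‖b i - a i‖ with hℓ
  set x : ℕ → ℝ := fun i => |(b i - a i) 0| with hx
  set y : ℕ → ℝ := fun i => |(b i - a i) 1| with hy
  have hxl : ∀ i, x i ≤ ℓ i := fun i => coord_le_norm _ 0
  have hyl : ∀ i, y i ≤ ℓ i := fun i => coord_le_norm _ 1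
  have hx0 : ∀ i, 0 ≤ x i := fun i => abs_nonneg _
  have hy0 : ∀ i, 0 ≤ y i := fun i => abs_nonneg _
  have hl0 : ∀ i, 0 ≤ ℓ i := fun i => norm_nonneg _
  have hxsum : Summable x := Summable.of_nonneg_of_le hx0 hxl hsum
  have hysum : Summable y := Summable.of_nonneg_of_le hy0 hyl hsum
  -- projection inequalities
  have P10 : (1:ℝ) ≤ ∑' i, x i := by
    have h := proj_bound a b hbar hsum 1 0 (by norm_num)
    simp only [one_mul, zero_mul, add_zero, abs_one, abs_zero] at h
    linarith
  have P01 : (1:ℝ) ≤ ∑' i, y i := by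
    have h := proj_bound a b hbar hsum 0 1 (by norm_num)
    simp only [one_mul, zero_mul, zero_add, abs_one, abs_zero] at h
    linarith
  have P11 : (2:ℝ) ≤ ∑' i, |(b i - a i) 0 + (b i - a i) 1| := by
    have h := proj_bound a b hbar hsum 1 1 (by norm_num)
    simp only [one_mul, abs_one] at h
    linarith
  have P1m1 : (2:ℝ) ≤ ∑' i, |(b i - a i) 0 - (b i - a i) 1| := by
    have h := proj_bound a b hbar hsum 1 (-1) (by norm_num)
    simp only [one_mul, neg_one_mul, abs_one, abs_neg, ← sub_eq_add_neg] at h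
    linarith
  -- sum of maxima ≥ 2
  have hmaxle : ∀ i, max (x i) (y i) ≤ ℓ i := fun i => max_le (hxl i) (hyl i)
  have hmaxsum : Summable (fun i => max (x i) (y i)) :=
    Summable.of_nonneg_of_le (fun i => le_max_of_le_left (hx0 i)) hmaxle hsum
  have hsum2 : Summable (fun i => ℓ i + ℓ i) := hsum.add hsum
  have hsum_p : Summable (fun i => |(b i - a i) 0 + (b i - a i) 1|) :=
    Summable.of_nonneg_of_le (fun i => abs_nonneg _)
      (fun i => le_trans (abs_add_le _ _) (add_le_add (hxl i) (hyl i))) hsum2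
  have hsum_m : Summable (fun i => |(b i - a i) 0 - (b i - a i) 1|) :=
    Summable.of_nonneg_of_le (fun i => abs_nonneg _)
      (fun i => le_trans (abs_sub _ _) (add_le_add (hxl i) (hyl i))) hsum2
  have Pmax : (2:ℝ) ≤ ∑' i, max (x i) (y i) := by
    have e : ∀ i, max (x i) (y i)
        = (|(b i - a i) 0 + (b i - a i) 1| + |(b i - a i) 0 - (b i - a i) 1|) * (1/2) := by
      intro i
      rw [hx, hy]; dsimp only
      rw [max_abs_eq]; ring
    rw [tsum_congr e, tsum_mul_right, Summable.tsum_add hsum_p hsum_m]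
    linarith
  -- classes
  set XS : Set ℕ := {j | AlmostHorizontal (a j) (b j)} with hXS
  set YS : Set ℕ := {j | AlmostVertical (a j) (b j)} with hYS
  set ZS : Set ℕ := {j | ¬ AlmostHorizontal (a j) (b j) ∧ ¬ AlmostVertical (a j) (b j)} with hZS
  have hXind : Summable (XS.indicator ℓ) := hsum.indicator XS
  have hYind : Summable (YS.indicator ℓ) := hsum.indicator YS
  have hZind : Summable (ZS.indicator ℓ) := hsum.indicator ZS
  set SX : ℝ := ∑' i, XS.indicator ℓ i with hSX
  set SY : ℝ := ∑' i, YS.indicator ℓ i with hSY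
  set SZ : ℝ := ∑' i, ZS.indicator ℓ i with hSZ
  set L : ℝ := ∑' i, ℓ i with hLd
  have hind_nonneg : ∀ (S : Set ℕ) i, 0 ≤ S.indicator ℓ i :=
    fun S i => Set.indicator_nonneg (fun j _ => hl0 j) i
  have hSX0 : 0 ≤ SX := tsum_nonneg (hind_nonneg XS)
  have hSY0 : 0 ≤ SY := tsum_nonneg (hind_nonneg YS)
  have hSZ0 : 0 ≤ SZ := tsum_nonneg (hind_nonneg ZS)
  have hind_le : ∀ (S : Set ℕ) i, S.indicator ℓ i ≤ ℓ i := by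
    intro S i
    by_cases h : i ∈ S
    · rw [Set.indicator_of_mem h]
    · rw [Set.indicator_of_notMem h]; exact hl0 i
  -- Upper bound for SX
  have hUX : (1 - 1/10000) * SX ≤ L - 1 := by
    have key : ∀ i, y i ≤ (1/10000) * XS.indicator ℓ i + (ℓ i - XS.indicator ℓ i) := by
      intro i
      by_cases h : i ∈ XS
      · rw [Set.indicator_of_mem h]
        have h' : y i ≤ (1/10000) * ℓ i := by
          have := h; rw [hXS] at this
          simpa [AlmostHorizontal, hs4, hy, hℓ] using this
        linarith
      · rw [Set.indicator_of_notMem h]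
        have := hyl i; linarith
    have h2 : ∑' i, y i ≤ ∑' i, ((1/10000) * XS.indicator ℓ i + (ℓ i - XS.indicator ℓ i)) :=
      Summable.tsum_le_tsum key hysum ((hXind.mul_left _).add (hsum.sub hXind))
    rw [Summable.tsum_add (hXind.mul_left _) (hsum.sub hXind), tsum_mul_left,
      Summable.tsum_sub hsum hXind] at h2
    have := P01
    linarith
  have hUY : (1 - 1/10000) * SY ≤ L - 1 := by
    have key : ∀ i, x i ≤ (1/10000) * YS.indicator ℓ i + (ℓ i - YS.indicator ℓ i) := by
      intro i
      by_cases h : i ∈ YS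
      · rw [Set.indicator_of_mem h]
        have h' : x i ≤ (1/10000) * ℓ i := by
          have := h; rw [hYS] at this
          simpa [AlmostVertical, hs4, hx, hℓ] using this
        linarith
      · rw [Set.indicator_of_notMem h]
        have := hxl i; linarith
    have h2 : ∑' i, x i ≤ ∑' i, ((1/10000) * YS.indicator ℓ i + (ℓ i - YS.indicator ℓ i)) :=
      Summable.tsum_le_tsum key hxsum ((hYind.mul_left _).add (hsum.sub hYind))
    rw [Summable.tsum_add (hYind.mul_left _) (hsum.sub hYind), tsum_mul_left,
      Summable.tsum_sub hsum hYind] at h2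
    have := P10
    linarith
  -- Bound on SZ
  have hZbd : (1/200000000) * SZ ≤ L - 2 := by
    have key : ∀ i, (1/200000000) * ZS.indicator ℓ i ≤ ℓ i - max (x i) (y i) := by
      intro i
      by_cases h : i ∈ ZS
      · rw [Set.indicator_of_mem h]
        rw [hZS] at h
        have hxx : (1/10000) * ℓ i < x i := by
          have := h.2; rw [AlmostVertical, not_le] at this
          rw [hs4] at this
          exact this
        have hyy : (1/10000) * ℓ i < y i := by
          have := h.1; rw [AlmostHorizontal, not_le] at this
          rw [hs4] at this
          exact this
        have hsq : ℓ i ^ 2 = x i ^ 2 + y i ^ 2 := norm_sq_eq _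
        have goal2 : max (x i) (y i) ≤ (1 - 1/200000000) * ℓ i := by
          rcases max_cases (x i) (y i) with ⟨he, _⟩ | ⟨he, _⟩ <;> rw [he]
          · nlinarith [hx0 i, hy0 i, hl0 i, sq_nonneg (x i - ℓ i), sq_nonneg (x i + ℓ i)]
          · nlinarith [hx0 i, hy0 i, hl0 i, sq_nonneg (y i - ℓ i), sq_nonneg (y i + ℓ i)]
        linarith
      · rw [Set.indicator_of_notMem h]
        have := hmaxle i; linarith
    have h2 : ∑' i, (1/200000000) * ZS.indicator ℓ i ≤ ∑' i, (ℓ i - max (x i) (y i)) :=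
      Summable.tsum_le_tsum key (hZind.mul_left _) (hsum.sub hmaxsum)
    rw [tsum_mul_left, Summable.tsum_sub hsum hmaxsum] at h2
    linarith [Pmax]
  -- Lower bound: 1 ≤ SX + s SY + SZ
  have hLX : (1:ℝ) ≤ SX + (1/10000) * SY + SZ := by
    have key : ∀ i, x i ≤ XS.indicator ℓ i + (1/10000) * YS.indicator ℓ i
        + ZS.indicator ℓ i := by
      intro i
      by_cases h1 : i ∈ XS
      · rw [Set.indicator_of_mem h1]
        have := hxl i
        have := hind_nonneg YS i
        have := hind_nonneg ZS i
        nlinarith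
      · by_cases h2 : i ∈ YS
        · rw [Set.indicator_of_mem h2]
          have h' : x i ≤ (1/10000) * ℓ i := by
            have := h2; rw [hYS] at this
            simpa [AlmostVertical, hs4, hx, hℓ] using this
          have := hind_nonneg XS i
          have := hind_nonneg ZS i
          linarith
        · have h3 : i ∈ ZS := by
            rw [hZS]; exact ⟨by rw [hXS] at h1; exact h1, by rw [hYS] at h2; exact h2⟩
          rw [Set.indicator_of_mem h3]
          have := hxl i
          have := hind_nonneg XS i
          have := hind_nonneg YS i
          linarith
    have h2 : ∑' i, x i ≤ ∑' i, (XS.indicator ℓ i + (1/10000) * YS.indicator ℓ i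
        + ZS.indicator ℓ i) :=
      Summable.tsum_le_tsum key hxsum ((hXind.add (hYind.mul_left _)).add hZind)
    rw [Summable.tsum_add (hXind.add (hYind.mul_left _)) hZind,
      Summable.tsum_add hXind (hYind.mul_left _), tsum_mul_left] at h2
    linarith [P10]
  have hLY : (1:ℝ) ≤ SY + (1/10000) * SX + SZ := by
    have key : ∀ i, y i ≤ YS.indicator ℓ i + (1/10000) * XS.indicator ℓ i
        + ZS.indicator ℓ i := by
      intro i
      by_cases h1 : i ∈ YS
      · rw [Set.indicator_of_mem h1]
        have := hyl i
        have := hind_nonneg XS i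
        have := hind_nonneg ZS i
        nlinarith
      · by_cases h2 : i ∈ XS
        · rw [Set.indicator_of_mem h2]
          have h' : y i ≤ (1/10000) * ℓ i := by
            have := h2; rw [hXS] at this
            simpa [AlmostHorizontal, hs4, hy, hℓ] using this
          have := hind_nonneg YS i
          have := hind_nonneg ZS i
          linarith
        · have h3 : i ∈ ZS := by
            rw [hZS]; exact ⟨by rw [hXS] at h2; exact h2, by rw [hYS] at h1; exact h1⟩
          rw [Set.indicator_of_mem h3]
          have := hyl i
          have := hind_nonneg XS i
          have := hind_nonneg YS i
          linarith
    have h2 : ∑' i, y i ≤ ∑' i, (YS.indicator ℓ i + (1/10000) * XS.indicator ℓ i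
        + ZS.indicator ℓ i) :=
      Summable.tsum_le_tsum key hysum ((hYind.add (hXind.mul_left _)).add hZind)
    rw [Summable.tsum_add (hYind.add (hXind.mul_left _)) hZind,
      Summable.tsum_add hYind (hXind.mul_left _), tsum_mul_left] at h2
    linarith [P01]
  -- identify statement tsums
  have hXeq : (∑' i : {j : ℕ // AlmostHorizontal (a j) (b j)}, ‖b i.1 - a i.1‖) = SX :=
    tsum_subtype XS ℓ
  have hYeq : (∑' i : {j : ℕ // AlmostVertical (a j) (b j)}, ‖b i.1 - a i.1‖) = SY :=
    tsum_subtype YS ℓ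
  rw [hXeq, hYeq, hs4]
  have hL' : L ≤ 2 + 1/1000000000000 := by rw [hs12] at hL; exact hL
  refine ⟨by linarith, by linarith, by linarith, by linarith⟩
end
end

section
/- With the setup parameters δ = 10⁻¹² and sin φ = 10⁻⁴, let Γ be a segment barrier for the unit square U with total length L ≤ 2 + δ, partitioned into the almost horizontal segments X, the almost vertical segments Y, and the remaining segments Z. Let V = [0,1] × ℝ be the vertical strip of unit width containing U and H = ℝ × [0,1] the horizontal strip of unit width containing U. Then Σ_{s ∈ X} H¹(s \ V) ≤ (9/2)·10⁻⁴ and Σ_{s ∈ Y} H¹(s \ H) ≤ (9/2)·10⁻⁴ (i.e., |X ∩ V̄| ≤ (9/2) sin φ and |Y ∩ H̄| ≤ (9/2) sin φ). -/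
open MeasureTheory Set

noncomputable section

section Helpers

open ENNReal

/-! ### Auxiliary lemmas -/

lemma normsq_aux (x : Pt) : (x 0)^2 + (x 1)^2 = ‖x‖^2 := by
  rw [EuclideanSpace.norm_eq, Real.sq_sqrt (by positivity)]
  simp [Fin.sum_univ_two, Real.norm_eq_abs, sq_abs]

lemma abs_coord_le_aux (x : Pt) (i : Fin 2) : |x i| ≤ ‖x‖ := by
  have h := normsq_aux x
  fin_cases i
  · show |x 0| ≤ ‖x‖
    nlinarith [abs_nonneg (x 0), sq_abs (x 0), norm_nonneg x]
  · show |x 1| ≤ ‖x‖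
    nlinarith [abs_nonneg (x 1), sq_abs (x 1), norm_nonneg x]

lemma lip_eval_aux (i : Fin 2) : LipschitzWith 1 (fun p : Pt => p i) := by
  refine LipschitzWith.of_dist_le_mul fun p q => ?_
  have h : p i - q i = (p - q) i := by simp
  rw [Real.dist_eq, h, NNReal.coe_one, one_mul, dist_eq_norm]
  exact abs_coord_le_aux _ i

lemma seg_measure_aux (a b : Pt) : μH[1] (segment ℝ a b) = ENNReal.ofReal ‖b - a‖ := by
  rw [hausdorffMeasure_segment, edist_dist, dist_eq_norm, norm_sub_rev]

def ptm (u v : ℝ) : Pt := (WithLp.equiv 2 (Fin 2 → ℝ)).symm ![u, v]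

@[simp] lemma ptm_zero (u v : ℝ) : ptm u v 0 = u := rfl
@[simp] lemma ptm_one (u v : ℝ) : ptm u v 1 = v := rfl

lemma bar_cover0 {Γ : Set Pt} (hbar : IsBarrier Γ unitSquare) {c : ℝ}
    (hc : c ∈ Icc (0:ℝ) 1) : ∃ q ∈ Γ, q 0 = c := by
  obtain ⟨q, hql, hqΓ⟩ := hbar {q : Pt | ∃ t : ℝ, q = ptm c (1/2) + t • ptm 0 1}
    ⟨ptm c (1/2), ptm 0 1, fun h => by simpa using congrArg (fun p : Pt => p 1) h, rfl⟩
    ⟨ptm c (1/2), ⟨0, by simp⟩, ⟨by simpa using hc, by norm_num⟩⟩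
  obtain ⟨t, rfl⟩ := hql
  exact ⟨_, hqΓ, by simp⟩

lemma bar_cover1 {Γ : Set Pt} (hbar : IsBarrier Γ unitSquare) {c : ℝ}
    (hc : c ∈ Icc (0:ℝ) 1) : ∃ q ∈ Γ, q 1 = c := by
  obtain ⟨q, hql, hqΓ⟩ := hbar {q : Pt | ∃ t : ℝ, q = ptm (1/2) c + t • ptm 1 0}
    ⟨ptm (1/2) c, ptm 1 0, fun h => by simpa using congrArg (fun p : Pt => p 0) h, rfl⟩
    ⟨ptm (1/2) c, ⟨0, by simp⟩, ⟨by norm_num, by simpa using hc⟩⟩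
  obtain ⟨t, rfl⟩ := hql
  exact ⟨_, hqΓ, by simp⟩

lemma mem_unitSquare_aux {u v : ℝ} (hu : u ∈ Icc (0:ℝ) 1) (hv : v ∈ Icc (0:ℝ) 1) :
    ptm u v ∈ unitSquare := ⟨by simpa using hu, by simpa using hv⟩

lemma bar_coverD {Γ : Set Pt} (hbar : IsBarrier Γ unitSquare) {c : ℝ}
    (hc : c ∈ Icc (0:ℝ) 2) : ∃ q ∈ Γ, q 0 + q 1 = c := by
  obtain ⟨q, hql, hqΓ⟩ := hbar {q : Pt | ∃ t : ℝ, q = ptm (c/2) (c/2) + t • ptm 1 (-1)}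
    ⟨ptm (c/2) (c/2), ptm 1 (-1), fun h => by simpa using congrArg (fun p : Pt => p 0) h, rfl⟩
    ⟨ptm (c/2) (c/2), ⟨0, by simp⟩,
      mem_unitSquare_aux ⟨by linarith [hc.1], by linarith [hc.2]⟩
        ⟨by linarith [hc.1], by linarith [hc.2]⟩⟩
  obtain ⟨t, rfl⟩ := hql
  refine ⟨_, hqΓ, by simp; ring⟩

lemma bar_coverA {Γ : Set Pt} (hbar : IsBarrier Γ unitSquare) {c : ℝ}
    (hc : c ∈ Icc (-1:ℝ) 1) : ∃ q ∈ Γ, q 0 - q 1 = c := by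
  obtain ⟨q, hql, hqΓ⟩ := hbar {q : Pt | ∃ t : ℝ, q = ptm ((c+1)/2) ((1-c)/2) + t • ptm 1 1}
    ⟨ptm ((c+1)/2) ((1-c)/2), ptm 1 1, fun h => by simpa using congrArg (fun p : Pt => p 0) h, rfl⟩
    ⟨ptm ((c+1)/2) ((1-c)/2), ⟨0, by simp⟩,
      mem_unitSquare_aux ⟨by linarith [hc.1], by linarith [hc.2]⟩
        ⟨by linarith [hc.2], by linarith [hc.1]⟩⟩
  obtain ⟨t, rfl⟩ := hql
  refine ⟨_, hqΓ, by simp; ring⟩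

lemma image_eval_aux (i : Fin 2) (a b : Pt) :
    (fun p : Pt => p i) '' segment ℝ a b = segment ℝ (a i) (b i) := by
  simpa using image_segment ℝ ((EuclideanSpace.projₗ i : Pt →ₗ[ℝ] ℝ).toAffineMap) a b

lemma image_addCoords_aux (a b : Pt) :
    (fun p : Pt => p 0 + p 1) '' segment ℝ a b = segment ℝ (a 0 + a 1) (b 0 + b 1) := by
  convert image_segment ℝ
    (((EuclideanSpace.projₗ 0 + EuclideanSpace.projₗ 1 : Pt →ₗ[ℝ] ℝ)).toAffineMap) a b using 2
  all_goals rfl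

lemma image_subCoords_aux (a b : Pt) :
    (fun p : Pt => p 0 - p 1) '' segment ℝ a b = segment ℝ (a 0 - a 1) (b 0 - b 1) := by
  convert image_segment ℝ
    (((EuclideanSpace.projₗ 0 - EuclideanSpace.projₗ 1 : Pt →ₗ[ℝ] ℝ)).toAffineMap) a b using 2
  all_goals rfl

lemma vol_seg_aux (r s : ℝ) : volume (segment ℝ r s) = ENNReal.ofReal |s - r| := by
  rw [segment_eq_uIcc, Real.volume_interval]

lemma abs_add_sub_le_aux {u v m : ℝ} (hu : |u| ≤ m) (hv : |v| ≤ m) :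
    |u + v| + |u - v| ≤ 2 * m := by
  obtain ⟨hu1, hu2⟩ := abs_le.mp hu
  obtain ⟨hv1, hv2⟩ := abs_le.mp hv
  rcases le_total 0 (u + v) with h1 | h1 <;> rcases le_total 0 (u - v) with h2 | h2
  · rw [abs_of_nonneg h1, abs_of_nonneg h2]; linarith
  · rw [abs_of_nonneg h1, abs_of_nonpos h2]; linarith
  · rw [abs_of_nonpos h1, abs_of_nonneg h2]; linarith
  · rw [abs_of_nonpos h1, abs_of_nonpos h2]; linarith

lemma le_tsum_toReal_aux {f : ℕ → ℝ≥0∞} {g : ℕ → ℝ} (hg0 : ∀ i, 0 ≤ g i) (hg : Summable g)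
    (hfg : ∀ i, f i ≤ ENNReal.ofReal (g i)) {c : ℝ} (hc0 : 0 ≤ c)
    (hc : ENNReal.ofReal c ≤ ∑' i, f i) :
    (c ≤ ∑' i, (f i).toReal) ∧ Summable (fun i => (f i).toReal) := by
  have h1 : ∑' i, f i ≤ ENNReal.ofReal (∑' i, g i) := by
    rw [ENNReal.ofReal_tsum_of_nonneg hg0 hg]
    exact ENNReal.tsum_le_tsum hfg
  have hne : ∑' i, f i ≠ ⊤ := (lt_of_le_of_lt h1 ENNReal.ofReal_lt_top).ne
  have hfi : ∀ i, f i ≠ ⊤ := fun i => (lt_of_le_of_lt (hfg i) ENNReal.ofReal_lt_top).ne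
  refine ⟨?_, ENNReal.summable_toReal hne⟩
  have h2 := ENNReal.toReal_mono hne hc
  rwa [ENNReal.toReal_ofReal hc0, ENNReal.tsum_toReal_eq hfi] at h2

/-! ### Definitions for the main argument -/

def Vs : Set Pt := {p : Pt | p 0 ∈ Icc (0:ℝ) 1}
def Ws : Set Pt := {p : Pt | p 1 ∈ Icc (0:ℝ) 1}

variable (a b : ℕ → Pt)

def sg (i : ℕ) : Set Pt := segment ℝ (a i) (b i)
def LL (i : ℕ) : ℝ := ‖b i - a i‖
def vv (i : ℕ) : ℝ := (μH[1] (sg a b i ∩ Vs)).toReal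
def hh (i : ℕ) : ℝ := (μH[1] (sg a b i ∩ Ws)).toReal
def PP (i : ℕ) : ℝ≥0∞ := volume ((fun p : Pt => p 0) '' sg a b i ∩ Icc (0:ℝ) 1)
def QQ (i : ℕ) : ℝ≥0∞ := volume ((fun p : Pt => p 1) '' sg a b i ∩ Icc (0:ℝ) 1)
def pp (i : ℕ) : ℝ := (PP a b i).toReal
def qq (i : ℕ) : ℝ := (QQ a b i).toReal
def dd (i : ℕ) : ℝ := |(b i - a i) 0 + (b i - a i) 1|
def ee (i : ℕ) : ℝ := |(b i - a i) 0 - (b i - a i) 1|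

lemma measurable_Vs : MeasurableSet Vs :=
  (lip_eval_aux 0).continuous.measurable measurableSet_Icc
lemma measurable_Ws : MeasurableSet Ws :=
  (lip_eval_aux 1).continuous.measurable measurableSet_Icc

lemma sg_measure (i : ℕ) : μH[1] (sg a b i) = ENNReal.ofReal (LL a b i) :=
  seg_measure_aux _ _

lemma sub_coord (i : ℕ) (k : Fin 2) : (b i - a i) k = b i k - a i k := by simp

lemma abs_coord_le_L (i : ℕ) (k : Fin 2) : |(b i - a i) k| ≤ LL a b i :=
  abs_coord_le_aux _ k

lemma muV_ne_top (i : ℕ) : μH[1] (sg a b i ∩ Vs) ≠ ⊤ := by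
  refine ne_top_of_le_ne_top ?_ (measure_mono inter_subset_left)
  rw [sg_measure]; exact ofReal_ne_top
lemma muW_ne_top (i : ℕ) : μH[1] (sg a b i ∩ Ws) ≠ ⊤ := by
  refine ne_top_of_le_ne_top ?_ (measure_mono inter_subset_left)
  rw [sg_measure]; exact ofReal_ne_top
lemma muVd_ne_top (i : ℕ) : μH[1] (sg a b i \ Vs) ≠ ⊤ := by
  refine ne_top_of_le_ne_top ?_ (measure_mono diff_subset)
  rw [sg_measure]; exact ofReal_ne_top
lemma muWd_ne_top (i : ℕ) : μH[1] (sg a b i \ Ws) ≠ ⊤ := by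
  refine ne_top_of_le_ne_top ?_ (measure_mono diff_subset)
  rw [sg_measure]; exact ofReal_ne_top

lemma vv_nonneg (i : ℕ) : 0 ≤ vv a b i := ENNReal.toReal_nonneg
lemma hh_nonneg (i : ℕ) : 0 ≤ hh a b i := ENNReal.toReal_nonneg

lemma L_nonneg (i : ℕ) : 0 ≤ LL a b i := norm_nonneg _

lemma vv_le_L (i : ℕ) : vv a b i ≤ LL a b i := by
  have h : μH[1] (sg a b i ∩ Vs) ≤ ENNReal.ofReal (LL a b i) := by
    rw [← sg_measure]; exact measure_mono inter_subset_left
  have h2 := ENNReal.toReal_mono ofReal_ne_top h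
  rwa [ENNReal.toReal_ofReal (L_nonneg a b i)] at h2

lemma hh_le_L (i : ℕ) : hh a b i ≤ LL a b i := by
  have h : μH[1] (sg a b i ∩ Ws) ≤ ENNReal.ofReal (LL a b i) := by
    rw [← sg_measure]; exact measure_mono inter_subset_left
  have h2 := ENNReal.toReal_mono ofReal_ne_top h
  rwa [ENNReal.toReal_ofReal (L_nonneg a b i)] at h2

lemma diff_v (i : ℕ) : (μH[1] (sg a b i \ Vs)).toReal = LL a b i - vv a b i := by
  have h := measure_inter_add_diff (μ := μH[1]) (sg a b i) measurable_Vs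
  rw [sg_measure] at h
  have h2 := congrArg ENNReal.toReal h
  rw [ENNReal.toReal_add (muV_ne_top a b i) (muVd_ne_top a b i),
    ENNReal.toReal_ofReal (L_nonneg a b i)] at h2
  simp only [vv] at *
  linarith

lemma diff_h (i : ℕ) : (μH[1] (sg a b i \ Ws)).toReal = LL a b i - hh a b i := by
  have h := measure_inter_add_diff (μ := μH[1]) (sg a b i) measurable_Ws
  rw [sg_measure] at h
  have h2 := congrArg ENNReal.toReal h
  rw [ENNReal.toReal_add (muW_ne_top a b i) (muWd_ne_top a b i),
    ENNReal.toReal_ofReal (L_nonneg a b i)] at h2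
  simp only [hh] at *
  linarith

lemma PP_le_abs (i : ℕ) : PP a b i ≤ ENNReal.ofReal |(b i - a i) 0| := by
  calc PP a b i ≤ volume ((fun p : Pt => p 0) '' sg a b i) := measure_mono inter_subset_left
  _ = volume (segment ℝ (a i 0) (b i 0)) := by rw [sg, image_eval_aux]
  _ = ENNReal.ofReal |b i 0 - a i 0| := vol_seg_aux _ _
  _ = ENNReal.ofReal |(b i - a i) 0| := by rw [sub_coord]

lemma QQ_le_abs (i : ℕ) : QQ a b i ≤ ENNReal.ofReal |(b i - a i) 1| := by
  calc QQ a b i ≤ volume ((fun p : Pt => p 1) '' sg a b i) := measure_mono inter_subset_left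
  _ = volume (segment ℝ (a i 1) (b i 1)) := by rw [sg, image_eval_aux]
  _ = ENNReal.ofReal |b i 1 - a i 1| := vol_seg_aux _ _
  _ = ENNReal.ofReal |(b i - a i) 1| := by rw [sub_coord]

lemma pp_le_abs (i : ℕ) : pp a b i ≤ |(b i - a i) 0| := by
  have := ENNReal.toReal_mono ofReal_ne_top (PP_le_abs a b i)
  rwa [ENNReal.toReal_ofReal (abs_nonneg _)] at this

lemma qq_le_abs (i : ℕ) : qq a b i ≤ |(b i - a i) 1| := by
  have := ENNReal.toReal_mono ofReal_ne_top (QQ_le_abs a b i)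
  rwa [ENNReal.toReal_ofReal (abs_nonneg _)] at this

lemma pp_le_L (i : ℕ) : pp a b i ≤ LL a b i :=
  (pp_le_abs a b i).trans (abs_coord_le_L a b i 0)
lemma qq_le_L (i : ℕ) : qq a b i ≤ LL a b i :=
  (qq_le_abs a b i).trans (abs_coord_le_L a b i 1)

lemma PP_le_muV (i : ℕ) : PP a b i ≤ μH[1] (sg a b i ∩ Vs) := by
  have him : (fun p : Pt => p 0) '' (sg a b i ∩ Vs)
      = (fun p : Pt => p 0) '' sg a b i ∩ Icc (0:ℝ) 1 := by
    ext c; constructor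
    · rintro ⟨q, ⟨h1, h2⟩, rfl⟩; exact ⟨⟨q, h1, rfl⟩, h2⟩
    · rintro ⟨⟨q, h1, rfl⟩, h2⟩; exact ⟨q, ⟨h1, h2⟩, rfl⟩
  have hlip := (lip_eval_aux 0).hausdorffMeasure_image_le
    (zero_le_one) (sg a b i ∩ Vs)
  simp only [ENNReal.coe_one, ENNReal.rpow_one, one_mul] at hlip
  calc PP a b i = volume ((fun p : Pt => p 0) '' (sg a b i ∩ Vs)) := by rw [PP, him]
  _ = μH[1] ((fun p : Pt => p 0) '' (sg a b i ∩ Vs)) := by rw [hausdorffMeasure_real]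
  _ ≤ μH[1] (sg a b i ∩ Vs) := hlip

lemma QQ_le_muW (i : ℕ) : QQ a b i ≤ μH[1] (sg a b i ∩ Ws) := by
  have him : (fun p : Pt => p 1) '' (sg a b i ∩ Ws)
      = (fun p : Pt => p 1) '' sg a b i ∩ Icc (0:ℝ) 1 := by
    ext c; constructor
    · rintro ⟨q, ⟨h1, h2⟩, rfl⟩; exact ⟨⟨q, h1, rfl⟩, h2⟩
    · rintro ⟨⟨q, h1, rfl⟩, h2⟩; exact ⟨q, ⟨h1, h2⟩, rfl⟩
  have hlip := (lip_eval_aux 1).hausdorffMeasure_image_le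
    (zero_le_one) (sg a b i ∩ Ws)
  simp only [ENNReal.coe_one, ENNReal.rpow_one, one_mul] at hlip
  calc QQ a b i = volume ((fun p : Pt => p 1) '' (sg a b i ∩ Ws)) := by rw [QQ, him]
  _ = μH[1] ((fun p : Pt => p 1) '' (sg a b i ∩ Ws)) := by rw [hausdorffMeasure_real]
  _ ≤ μH[1] (sg a b i ∩ Ws) := hlip

lemma pp_le_vv (i : ℕ) : pp a b i ≤ vv a b i :=
  ENNReal.toReal_mono (muV_ne_top a b i) (PP_le_muV a b i)
lemma qq_le_hh (i : ℕ) : qq a b i ≤ hh a b i :=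
  ENNReal.toReal_mono (muW_ne_top a b i) (QQ_le_muW a b i)

/-! ### Covering constraints -/

lemma proj0_constraint (hbar : IsBarrier (⋃ i, segment ℝ (a i) (b i)) unitSquare)
    (hsum : Summable (LL a b)) :
    (1 ≤ ∑' i, pp a b i) ∧ Summable (pp a b) := by
  have hcov : Icc (0:ℝ) 1 ⊆ ⋃ i, ((fun p : Pt => p 0) '' sg a b i ∩ Icc (0:ℝ) 1) := by
    intro c hc
    obtain ⟨q, hqΓ, hq0⟩ := bar_cover0 hbar hc
    obtain ⟨i, hi⟩ := mem_iUnion.mp hqΓ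
    exact mem_iUnion.2 ⟨i, ⟨⟨q, hi, hq0⟩, hc⟩⟩
  have hc : ENNReal.ofReal (1:ℝ) ≤ ∑' i, PP a b i := by
    calc ENNReal.ofReal (1:ℝ) = volume (Icc (0:ℝ) 1) := by rw [Real.volume_Icc]; norm_num
    _ ≤ volume (⋃ i, ((fun p : Pt => p 0) '' sg a b i ∩ Icc (0:ℝ) 1)) := measure_mono hcov
    _ ≤ ∑' i, PP a b i := measure_iUnion_le _
  exact le_tsum_toReal_aux (L_nonneg a b) hsum
    (fun i => (PP_le_abs a b i).trans (ENNReal.ofReal_le_ofReal (abs_coord_le_L a b i 0)))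
    zero_le_one hc

lemma proj1_constraint (hbar : IsBarrier (⋃ i, segment ℝ (a i) (b i)) unitSquare)
    (hsum : Summable (LL a b)) :
    (1 ≤ ∑' i, qq a b i) ∧ Summable (qq a b) := by
  have hcov : Icc (0:ℝ) 1 ⊆ ⋃ i, ((fun p : Pt => p 1) '' sg a b i ∩ Icc (0:ℝ) 1) := by
    intro c hc
    obtain ⟨q, hqΓ, hq0⟩ := bar_cover1 hbar hc
    obtain ⟨i, hi⟩ := mem_iUnion.mp hqΓ
    exact mem_iUnion.2 ⟨i, ⟨⟨q, hi, hq0⟩, hc⟩⟩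
  have hc : ENNReal.ofReal (1:ℝ) ≤ ∑' i, QQ a b i := by
    calc ENNReal.ofReal (1:ℝ) = volume (Icc (0:ℝ) 1) := by rw [Real.volume_Icc]; norm_num
    _ ≤ volume (⋃ i, ((fun p : Pt => p 1) '' sg a b i ∩ Icc (0:ℝ) 1)) := measure_mono hcov
    _ ≤ ∑' i, QQ a b i := measure_iUnion_le _
  exact le_tsum_toReal_aux (L_nonneg a b) hsum
    (fun i => (QQ_le_abs a b i).trans (ENNReal.ofReal_le_ofReal (abs_coord_le_L a b i 1)))
    zero_le_one hc

lemma dd_nonneg (i : ℕ) : 0 ≤ dd a b i := abs_nonneg _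
lemma ee_nonneg (i : ℕ) : 0 ≤ ee a b i := abs_nonneg _

lemma dd_le_2L (i : ℕ) : dd a b i ≤ 2 * LL a b i := by
  have := (abs_add_le ((b i - a i) 0) ((b i - a i) 1))
  have h0 := abs_coord_le_L a b i 0
  have h1 := abs_coord_le_L a b i 1
  simp only [dd]; linarith

lemma ee_le_2L (i : ℕ) : ee a b i ≤ 2 * LL a b i := by
  have := (abs_sub ((b i - a i) 0) ((b i - a i) 1))
  have h0 := abs_coord_le_L a b i 0
  have h1 := abs_coord_le_L a b i 1
  simp only [ee]; linarith

lemma projD_constraint (hbar : IsBarrier (⋃ i, segment ℝ (a i) (b i)) unitSquare)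
    (hsum : Summable (LL a b)) :
    (2 ≤ ∑' i, dd a b i) ∧ Summable (dd a b) := by
  have him : ∀ i, volume ((fun p : Pt => p 0 + p 1) '' sg a b i)
      = ENNReal.ofReal (dd a b i) := by
    intro i
    rw [sg, image_addCoords_aux, vol_seg_aux]
    congr 1
    simp only [dd, sub_coord]
    ring_nf
  have hcov : Icc (0:ℝ) 2 ⊆ ⋃ i, ((fun p : Pt => p 0 + p 1) '' sg a b i) := by
    intro c hc
    obtain ⟨q, hqΓ, hq0⟩ := bar_coverD hbar hc
    obtain ⟨i, hi⟩ := mem_iUnion.mp hqΓ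
    exact mem_iUnion.2 ⟨i, ⟨q, hi, hq0⟩⟩
  have hc : ENNReal.ofReal (2:ℝ) ≤ ∑' i, volume ((fun p : Pt => p 0 + p 1) '' sg a b i) := by
    calc ENNReal.ofReal (2:ℝ) = volume (Icc (0:ℝ) 2) := by rw [Real.volume_Icc]; norm_num
    _ ≤ volume (⋃ i, ((fun p : Pt => p 0 + p 1) '' sg a b i)) := measure_mono hcov
    _ ≤ _ := measure_iUnion_le _
  have h := le_tsum_toReal_aux (g := fun i => 2 * LL a b i)
    (fun i => mul_nonneg (by norm_num) (L_nonneg a b i)) (hsum.mul_left 2)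
    (fun i => by rw [him i]; exact ENNReal.ofReal_le_ofReal (dd_le_2L a b i))
    (by norm_num) hc
  refine ⟨le_of_le_of_eq h.1 (tsum_congr fun i => ?_), ?_⟩
  · rw [him i, ENNReal.toReal_ofReal (dd_nonneg a b i)]
  · have := h.2
    simpa only [him, ENNReal.toReal_ofReal (dd_nonneg a b _)] using this

lemma projA_constraint (hbar : IsBarrier (⋃ i, segment ℝ (a i) (b i)) unitSquare)
    (hsum : Summable (LL a b)) :
    (2 ≤ ∑' i, ee a b i) ∧ Summable (ee a b) := by
  have him : ∀ i, volume ((fun p : Pt => p 0 - p 1) '' sg a b i)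
      = ENNReal.ofReal (ee a b i) := by
    intro i
    rw [sg, image_subCoords_aux, vol_seg_aux]
    congr 1
    simp only [ee, sub_coord]
    ring_nf
  have hcov : Icc (-1:ℝ) 1 ⊆ ⋃ i, ((fun p : Pt => p 0 - p 1) '' sg a b i) := by
    intro c hc
    obtain ⟨q, hqΓ, hq0⟩ := bar_coverA hbar hc
    obtain ⟨i, hi⟩ := mem_iUnion.mp hqΓ
    exact mem_iUnion.2 ⟨i, ⟨q, hi, hq0⟩⟩
  have hc : ENNReal.ofReal (2:ℝ) ≤ ∑' i, volume ((fun p : Pt => p 0 - p 1) '' sg a b i) := by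
    calc ENNReal.ofReal (2:ℝ) = volume (Icc (-1:ℝ) 1) := by rw [Real.volume_Icc]; norm_num
    _ ≤ volume (⋃ i, ((fun p : Pt => p 0 - p 1) '' sg a b i)) := measure_mono hcov
    _ ≤ _ := measure_iUnion_le _
  have h := le_tsum_toReal_aux (g := fun i => 2 * LL a b i)
    (fun i => mul_nonneg (by norm_num) (L_nonneg a b i)) (hsum.mul_left 2)
    (fun i => by rw [him i]; exact ENNReal.ofReal_le_ofReal (ee_le_2L a b i))
    (by norm_num) hc
  refine ⟨le_of_le_of_eq h.1 (tsum_congr fun i => ?_), ?_⟩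
  · rw [him i, ENNReal.toReal_ofReal (ee_nonneg a b i)]
  · have := h.2
    simpa only [him, ENNReal.toReal_ofReal (ee_nonneg a b _)] using this

/-! ### arithmetic class facts -/

lemma comp_bound {u w l : ℝ} (hl : 0 < l) (hsq : u^2 + w^2 = l^2)
    (hw : (1/10000) * l ≤ |w|) : |u| ≤ (1 - 1/200000000) * l := by
  have h0 : (0:ℝ) ≤ (1 - 1/200000000) * l := by nlinarith
  refine le_of_pow_le_pow_left₀ two_ne_zero h0 ?_
  have h1 : ((1:ℝ)/10000 * l)^2 ≤ |w|^2 := by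
    have := mul_self_le_mul_self (by positivity) hw
    nlinarith
  rw [sq_abs] at h1 ⊢
  nlinarith

lemma eps_eq : ((10:ℝ) ^ (-4 : ℤ)) = 1/10000 := by norm_num

lemma Z_bound (i : ℕ) (hab : a i ≠ b i)
    (hx : ¬ AlmostHorizontal (a i) (b i)) (hy : ¬ AlmostVertical (a i) (b i)) :
    dd a b i + ee a b i ≤ (2 - 1/100000000) * LL a b i := by
  have hl : 0 < LL a b i := by
    simpa [LL] using norm_sub_pos_iff.mpr (Ne.symm hab)
  have hsq := normsq_aux (b i - a i)
  have hx' : (1/10000) * LL a b i ≤ |(b i - a i) 1| := by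
    rw [AlmostHorizontal, eps_eq] at hx; push_neg at hx
    exact le_of_lt (by simpa [LL, mul_comm] using hx)
  have hy' : (1/10000) * LL a b i ≤ |(b i - a i) 0| := by
    rw [AlmostVertical, eps_eq] at hy; push_neg at hy
    exact le_of_lt (by simpa [LL, mul_comm] using hy)
  have h0 : |(b i - a i) 0| ≤ (1 - 1/200000000) * LL a b i :=
    comp_bound hl (by simpa [LL] using hsq) hx'
  have h1 : |(b i - a i) 1| ≤ (1 - 1/200000000) * LL a b i := by
    refine comp_bound hl ?_ hy'
    simp only [LL]; linarith [hsq]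
  have := abs_add_sub_le_aux h0 h1
  simp only [dd, ee]
  linarith

lemma XY_disjoint (i : ℕ) (hab : a i ≠ b i)
    (hx : AlmostHorizontal (a i) (b i)) : ¬ AlmostVertical (a i) (b i) := by
  intro hy
  rw [AlmostHorizontal, eps_eq] at hx
  rw [AlmostVertical, eps_eq] at hy
  have hl : 0 < ‖b i - a i‖ := norm_sub_pos_iff.mpr (Ne.symm hab)
  have hsq := normsq_aux (b i - a i)
  nlinarith [abs_nonneg ((b i - a i) 0), abs_nonneg ((b i - a i) 1),
    sq_abs ((b i - a i) 0), sq_abs ((b i - a i) 1),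
    mul_self_le_mul_self (abs_nonneg ((b i - a i) 0)) hy,
    mul_self_le_mul_self (abs_nonneg ((b i - a i) 1)) hx]

def SX : Set ℕ := {j | AlmostHorizontal (a j) (b j)}
def SY : Set ℕ := {j | AlmostVertical (a j) (b j)}
def SZ : Set ℕ := (SX a b ∪ SY a b)ᶜ

lemma mem_SZ_iff (i : ℕ) : i ∈ SZ a b ↔ (i ∉ SX a b ∧ i ∉ SY a b) := by
  simp [SZ, not_or]

lemma sumInd (hsum : Summable (LL a b)) (S : Set ℕ) (f : ℕ → ℝ) (h0 : ∀ i, 0 ≤ f i)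
    (h1 : ∀ i, f i ≤ LL a b i) : Summable (S.indicator f) := by
  refine Summable.of_nonneg_of_le (fun i => indicator_nonneg (fun j _ => h0 j) i)
    (fun i => ?_) hsum
  by_cases hi : i ∈ S
  · rw [indicator_of_mem hi]; exact h1 i
  · rw [indicator_of_notMem hi]; exact L_nonneg a b i


end Helpers

/-- Lemma 5: for a segment barrier of the unit square of total length at most
2 + δ (δ = 10⁻¹², sin φ = 10⁻⁴), the part of the almost horizontal segments X outside the
vertical strip V = [0,1] × ℝ has total length at most (9/2) sin φ, and the part of the
almost vertical segments Y outside the horizontal strip H = ℝ × [0,1] has total length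
at most (9/2) sin φ. -/
theorem X_outside_V_and_Y_outside_H_small
    (a b : ℕ → Pt) (hab : ∀ i, a i ≠ b i)
    (hbar : IsBarrier (⋃ i, segment ℝ (a i) (b i)) unitSquare)
    (hsum : Summable fun i => ‖b i - a i‖)
    (hL : ∑' i, ‖b i - a i‖ ≤ 2 + 10 ^ (-12 : ℤ)) :
    (∑' i : {j : ℕ // AlmostHorizontal (a j) (b j)},
        μH[1] (segment ℝ (a i.1) (b i.1) \ {p : Pt | p 0 ∈ Icc (0:ℝ) 1})
      ≤ ENNReal.ofReal ((9/2) * 10 ^ (-4 : ℤ))) ∧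
    (∑' i : {j : ℕ // AlmostVertical (a j) (b j)},
        μH[1] (segment ℝ (a i.1) (b i.1) \ {p : Pt | p 1 ∈ Icc (0:ℝ) 1})
      ≤ ENNReal.ofReal ((9/2) * 10 ^ (-4 : ℤ))) := by
  classical
  have hsumL : Summable (LL a b) := hsum
  have hdisj : ∀ i, i ∈ SX a b → i ∉ SY a b := fun i hx hy =>
    XY_disjoint a b i (hab i) hx hy
  -- summability of the various indicator sums
  have sLx : Summable ((SX a b).indicator (LL a b)) :=
    sumInd a b hsumL _ _ (L_nonneg a b) (fun i => le_refl _)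
  have sLy : Summable ((SY a b).indicator (LL a b)) :=
    sumInd a b hsumL _ _ (L_nonneg a b) (fun i => le_refl _)
  have sLz : Summable ((SZ a b).indicator (LL a b)) :=
    sumInd a b hsumL _ _ (L_nonneg a b) (fun i => le_refl _)
  have sV : Summable ((SX a b).indicator (vv a b)) :=
    sumInd a b hsumL _ _ (vv_nonneg a b) (vv_le_L a b)
  have sH : Summable ((SY a b).indicator (hh a b)) :=
    sumInd a b hsumL _ _ (hh_nonneg a b) (hh_le_L a b)
  have sWx : Summable ((SX a b).indicator (fun j => LL a b j - vv a b j)) :=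
    sumInd a b hsumL _ _ (fun i => by linarith [vv_le_L a b i])
      (fun i => by linarith [vv_nonneg a b i])
  have sWy : Summable ((SY a b).indicator (fun j => LL a b j - hh a b j)) :=
    sumInd a b hsumL _ _ (fun i => by linarith [hh_le_L a b i])
      (fun i => by linarith [hh_nonneg a b i])
  -- G1 : total length bound
  have hpart : ∀ i, (SX a b).indicator (LL a b) i + (SY a b).indicator (LL a b) i
      + (SZ a b).indicator (LL a b) i = LL a b i := by
    intro i
    by_cases hx : i ∈ SX a b
    · have hy := hdisj i hx
      have hz : i ∉ SZ a b := fun h => ((mem_SZ_iff a b i).mp h).1 hx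
      rw [indicator_of_mem hx, indicator_of_notMem hy, indicator_of_notMem hz]; ring
    · by_cases hy : i ∈ SY a b
      · have hz : i ∉ SZ a b := fun h => ((mem_SZ_iff a b i).mp h).2 hy
        rw [indicator_of_notMem hx, indicator_of_mem hy, indicator_of_notMem hz]; ring
      · have hz : i ∈ SZ a b := (mem_SZ_iff a b i).mpr ⟨hx, hy⟩
        rw [indicator_of_notMem hx, indicator_of_notMem hy, indicator_of_mem hz]; ring
  have hG1 : (∑' i, (SX a b).indicator (LL a b) i) + (∑' i, (SY a b).indicator (LL a b) i)
      + (∑' i, (SZ a b).indicator (LL a b) i) ≤ 2 + 1/1000000000000 := by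
    have e1 : ∑' i, ((SX a b).indicator (LL a b) i + (SY a b).indicator (LL a b) i
        + (SZ a b).indicator (LL a b) i) = (∑' i, (SX a b).indicator (LL a b) i)
        + (∑' i, (SY a b).indicator (LL a b) i) + (∑' i, (SZ a b).indicator (LL a b) i) := by
      rw [Summable.tsum_add (sLx.add sLy) sLz, Summable.tsum_add sLx sLy]
    have e2 : ∑' i, ((SX a b).indicator (LL a b) i + (SY a b).indicator (LL a b) i
        + (SZ a b).indicator (LL a b) i) = ∑' i, LL a b i := tsum_congr hpart
    have e3 : (10:ℝ) ^ (-12 : ℤ) = 1/1000000000000 := by norm_num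
    rw [← e1, e2]
    calc ∑' i, LL a b i ≤ 2 + (10:ℝ) ^ (-12 : ℤ) := hL
    _ = 2 + 1/1000000000000 := by rw [e3]
  -- G2
  have hp := proj0_constraint a b hbar hsumL
  have hbnd2 : ∀ i, pp a b i ≤ (SX a b).indicator (vv a b) i
      + (1/10000) * (SY a b).indicator (LL a b) i + (SZ a b).indicator (LL a b) i := by
    intro i
    by_cases hx : i ∈ SX a b
    · have hy := hdisj i hx
      have hz : i ∉ SZ a b := fun h => ((mem_SZ_iff a b i).mp h).1 hx
      rw [indicator_of_mem hx, indicator_of_notMem hy, indicator_of_notMem hz]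
      have := pp_le_vv a b i; linarith
    · by_cases hy : i ∈ SY a b
      · have hz : i ∉ SZ a b := fun h => ((mem_SZ_iff a b i).mp h).2 hy
        rw [indicator_of_notMem hx, indicator_of_mem hy, indicator_of_notMem hz]
        have h1 : |(b i - a i) 0| ≤ (1/10000) * LL a b i := by
          have := hy; rw [SY, mem_setOf_eq, AlmostVertical, eps_eq] at this; exact this
        have := pp_le_abs a b i
        have h0 := indicator_nonneg (fun j (_ : j ∈ SX a b) => vv_nonneg a b j) i
        linarith
      · have hz : i ∈ SZ a b := (mem_SZ_iff a b i).mpr ⟨hx, hy⟩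
        rw [indicator_of_notMem hx, indicator_of_notMem hy, indicator_of_mem hz]
        have := pp_le_L a b i
        have h0 := indicator_nonneg (fun j (_ : j ∈ SX a b) => vv_nonneg a b j) i
        have h1 := indicator_nonneg (fun j (_ : j ∈ SY a b) => L_nonneg a b j) i
        linarith
  have hG2 : 1 ≤ (∑' i, (SX a b).indicator (vv a b) i)
      + (1/10000) * (∑' i, (SY a b).indicator (LL a b) i)
      + (∑' i, (SZ a b).indicator (LL a b) i) := by
    have hmid : Summable (fun i => (1/10000 : ℝ) * (SY a b).indicator (LL a b) i) :=
      sLy.mul_left _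
    have h2 : ∑' i, pp a b i ≤ ∑' i, ((SX a b).indicator (vv a b) i
        + (1/10000) * (SY a b).indicator (LL a b) i + (SZ a b).indicator (LL a b) i) :=
      Summable.tsum_le_tsum hbnd2 hp.2 ((sV.add hmid).add sLz)
    rw [Summable.tsum_add (sV.add hmid) sLz, Summable.tsum_add sV hmid, tsum_mul_left] at h2
    linarith [hp.1]
  -- G3
  have hq := proj1_constraint a b hbar hsumL
  have hbnd3 : ∀ i, qq a b i ≤ (1/10000) * (SX a b).indicator (LL a b) i
      + (SY a b).indicator (hh a b) i + (SZ a b).indicator (LL a b) i := by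
    intro i
    by_cases hx : i ∈ SX a b
    · have hy := hdisj i hx
      have hz : i ∉ SZ a b := fun h => ((mem_SZ_iff a b i).mp h).1 hx
      rw [indicator_of_mem hx, indicator_of_notMem hy, indicator_of_notMem hz]
      have h1 : |(b i - a i) 1| ≤ (1/10000) * LL a b i := by
        have := hx; rw [SX, mem_setOf_eq, AlmostHorizontal, eps_eq] at this; exact this
      have := qq_le_abs a b i
      linarith
    · by_cases hy : i ∈ SY a b
      · have hz : i ∉ SZ a b := fun h => ((mem_SZ_iff a b i).mp h).2 hy
        rw [indicator_of_notMem hx, indicator_of_mem hy, indicator_of_notMem hz]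
        have := qq_le_hh a b i; linarith
      · have hz : i ∈ SZ a b := (mem_SZ_iff a b i).mpr ⟨hx, hy⟩
        rw [indicator_of_notMem hx, indicator_of_notMem hy, indicator_of_mem hz]
        have := qq_le_L a b i
        have h0 := indicator_nonneg (fun j (_ : j ∈ SY a b) => hh_nonneg a b j) i
        linarith
  have hG3 : 1 ≤ (1/10000) * (∑' i, (SX a b).indicator (LL a b) i)
      + (∑' i, (SY a b).indicator (hh a b) i)
      + (∑' i, (SZ a b).indicator (LL a b) i) := by
    have hmid : Summable (fun i => (1/10000 : ℝ) * (SX a b).indicator (LL a b) i) :=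
      sLx.mul_left _
    have h2 : ∑' i, qq a b i ≤ ∑' i, ((1/10000) * (SX a b).indicator (LL a b) i
        + (SY a b).indicator (hh a b) i + (SZ a b).indicator (LL a b) i) :=
      Summable.tsum_le_tsum hbnd3 hq.2 ((hmid.add sH).add sLz)
    rw [Summable.tsum_add (hmid.add sH) sLz, Summable.tsum_add hmid sH, tsum_mul_left] at h2
    linarith [hq.1]
  -- G4
  have hd := projD_constraint a b hbar hsumL
  have he := projA_constraint a b hbar hsumL
  have hbnd4 : ∀ i, dd a b i + ee a b i ≤ 2 * (SX a b).indicator (LL a b) i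
      + 2 * (SY a b).indicator (LL a b) i
      + (2 - 1/100000000) * (SZ a b).indicator (LL a b) i := by
    intro i
    have hgen : dd a b i + ee a b i ≤ 2 * LL a b i :=
      abs_add_sub_le_aux (abs_coord_le_L a b i 0) (abs_coord_le_L a b i 1)
    by_cases hx : i ∈ SX a b
    · have hy := hdisj i hx
      have hz : i ∉ SZ a b := fun h => ((mem_SZ_iff a b i).mp h).1 hx
      rw [indicator_of_mem hx, indicator_of_notMem hy, indicator_of_notMem hz]
      linarith
    · by_cases hy : i ∈ SY a b
      · have hz : i ∉ SZ a b := fun h => ((mem_SZ_iff a b i).mp h).2 hy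
        rw [indicator_of_notMem hx, indicator_of_mem hy, indicator_of_notMem hz]
        linarith
      · have hz : i ∈ SZ a b := (mem_SZ_iff a b i).mpr ⟨hx, hy⟩
        rw [indicator_of_notMem hx, indicator_of_notMem hy, indicator_of_mem hz]
        have := Z_bound a b i (hab i) hx hy
        linarith
  have hG4 : 4 ≤ 2 * (∑' i, (SX a b).indicator (LL a b) i)
      + 2 * (∑' i, (SY a b).indicator (LL a b) i)
      + (2 - 1/100000000) * (∑' i, (SZ a b).indicator (LL a b) i) := by
    have s1 : Summable (fun i => (2:ℝ) * (SX a b).indicator (LL a b) i) := sLx.mul_left _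
    have s2 : Summable (fun i => (2:ℝ) * (SY a b).indicator (LL a b) i) := sLy.mul_left _
    have s3 : Summable (fun i => (2 - 1/100000000 : ℝ) * (SZ a b).indicator (LL a b) i) :=
      sLz.mul_left _
    have h2 : ∑' i, (dd a b i + ee a b i) ≤ ∑' i, (2 * (SX a b).indicator (LL a b) i
        + 2 * (SY a b).indicator (LL a b) i
        + (2 - 1/100000000) * (SZ a b).indicator (LL a b) i) :=
      Summable.tsum_le_tsum hbnd4 (hd.2.add he.2) ((s1.add s2).add s3)
    rw [Summable.tsum_add hd.2 he.2] at h2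
    rw [Summable.tsum_add (s1.add s2) s3, Summable.tsum_add s1 s2, tsum_mul_left, tsum_mul_left,
      tsum_mul_left] at h2
    linarith [hd.1, he.1]
  -- remaining comparisons
  have hxV_le : (∑' i, (SX a b).indicator (vv a b) i)
      ≤ ∑' i, (SX a b).indicator (LL a b) i := by
    refine Summable.tsum_le_tsum (fun i => ?_) sV sLx
    by_cases hi : i ∈ SX a b
    · rw [indicator_of_mem hi, indicator_of_mem hi]; exact vv_le_L a b i
    · rw [indicator_of_notMem hi, indicator_of_notMem hi]
  have hyH_le : (∑' i, (SY a b).indicator (hh a b) i)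
      ≤ ∑' i, (SY a b).indicator (LL a b) i := by
    refine Summable.tsum_le_tsum (fun i => ?_) sH sLy
    by_cases hi : i ∈ SY a b
    · rw [indicator_of_mem hi, indicator_of_mem hi]; exact hh_le_L a b i
    · rw [indicator_of_notMem hi, indicator_of_notMem hi]
  have hz0 : 0 ≤ ∑' i, (SZ a b).indicator (LL a b) i :=
    tsum_nonneg (fun i => indicator_nonneg (fun j _ => L_nonneg a b j) i)
  have hx0 : 0 ≤ ∑' i, (SX a b).indicator (LL a b) i :=
    tsum_nonneg (fun i => indicator_nonneg (fun j _ => L_nonneg a b j) i)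
  have hy0 : 0 ≤ ∑' i, (SY a b).indicator (LL a b) i :=
    tsum_nonneg (fun i => indicator_nonneg (fun j _ => L_nonneg a b j) i)
  -- the two real target quantities
  have hE5 : ∑' i, (SX a b).indicator (fun j => LL a b j - vv a b j) i
      = (∑' i, (SX a b).indicator (LL a b) i) - ∑' i, (SX a b).indicator (vv a b) i := by
    rw [← Summable.tsum_sub sLx sV]
    refine tsum_congr fun i => ?_
    by_cases hi : i ∈ SX a b
    · rw [indicator_of_mem hi, indicator_of_mem hi, indicator_of_mem hi]
    · rw [indicator_of_notMem hi, indicator_of_notMem hi, indicator_of_notMem hi]; ring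
  have hE5' : ∑' i, (SY a b).indicator (fun j => LL a b j - hh a b j) i
      = (∑' i, (SY a b).indicator (LL a b) i) - ∑' i, (SY a b).indicator (hh a b) i := by
    rw [← Summable.tsum_sub sLy sH]
    refine tsum_congr fun i => ?_
    by_cases hi : i ∈ SY a b
    · rw [indicator_of_mem hi, indicator_of_mem hi, indicator_of_mem hi]
    · rw [indicator_of_notMem hi, indicator_of_notMem hi, indicator_of_notMem hi]; ring
  -- final real bounds
  have hfin1 : ∑' i, (SX a b).indicator (fun j => LL a b j - vv a b j) i ≤ 45/100000 := by
    rw [hE5]; linarith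
  have hfin2 : ∑' i, (SY a b).indicator (fun j => LL a b j - hh a b j) i ≤ 45/100000 := by
    rw [hE5']; linarith
  -- convert to the ENNReal statements
  have hcst : ((9:ℝ)/2) * 10 ^ (-4 : ℤ) = 45/100000 := by norm_num
  constructor
  · have hterm : ∀ i, (SX a b).indicator (fun j => μH[1] (sg a b j \ Vs)) i
        = ENNReal.ofReal ((SX a b).indicator (fun j => LL a b j - vv a b j) i) := by
      intro i
      by_cases hi : i ∈ SX a b
      · rw [indicator_of_mem hi, indicator_of_mem hi, ← diff_v a b i,
          ENNReal.ofReal_toReal (muVd_ne_top a b i)]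
      · rw [indicator_of_notMem hi, indicator_of_notMem hi]; simp
    have h1 : (∑' i : {j : ℕ // AlmostHorizontal (a j) (b j)},
          μH[1] (segment ℝ (a i.1) (b i.1) \ {p : Pt | p 0 ∈ Icc (0:ℝ) 1}))
        = ∑' i, (SX a b).indicator (fun j => μH[1] (sg a b j \ Vs)) i :=
      tsum_subtype (SX a b) (fun j => μH[1] (sg a b j \ Vs))
    rw [h1, tsum_congr hterm, ← ENNReal.ofReal_tsum_of_nonneg
      (fun i => indicator_nonneg (fun j _ => by linarith [vv_le_L a b j]) i) sWx]
    exact ENNReal.ofReal_le_ofReal (by rw [hcst]; exact hfin1)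
  · have hterm : ∀ i, (SY a b).indicator (fun j => μH[1] (sg a b j \ Ws)) i
        = ENNReal.ofReal ((SY a b).indicator (fun j => LL a b j - hh a b j) i) := by
      intro i
      by_cases hi : i ∈ SY a b
      · rw [indicator_of_mem hi, indicator_of_mem hi, ← diff_h a b i,
          ENNReal.ofReal_toReal (muWd_ne_top a b i)]
      · rw [indicator_of_notMem hi, indicator_of_notMem hi]; simp
    have h1 : (∑' i : {j : ℕ // AlmostVertical (a j) (b j)},
          μH[1] (segment ℝ (a i.1) (b i.1) \ {p : Pt | p 1 ∈ Icc (0:ℝ) 1}))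
        = ∑' i, (SY a b).indicator (fun j => μH[1] (sg a b j \ Ws)) i :=
      tsum_subtype (SY a b) (fun j => μH[1] (sg a b j \ Ws))
    rw [h1, tsum_congr hterm, ← ENNReal.ofReal_tsum_of_nonneg
      (fun i => indicator_nonneg (fun j _ => by linarith [hh_le_L a b j]) i) sWy]
    exact ENNReal.ofReal_le_ofReal (by rw [hcst]; exact hfin2)
end
end

section
/- With the setup parameters δ = 10⁻¹² and sin φ = 10⁻⁴, let Γ be a segment barrier for the unit square U with total length L ≤ 2 + δ, partitioned into the almost horizontal segments X, the almost vertical segments Y, and the remaining segments Z. Then for any intervals I, J ⊆ ℝ (not necessarily contained in [0,1]): Σ_{s ∈ X} H¹(s ∩ (I × ℝ)) ≤ λ(I ∩ [0,1]) + 5·10⁻⁴ and Σ_{s ∈ Y} H¹(s ∩ (ℝ × J)) ≤ λ(J ∩ [0,1]) + 5·10⁻⁴, where λ denotes 1-dimensional Lebesgue measure. -/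
open MeasureTheory Set ENNReal

set_option maxHeartbeats 1000000

noncomputable section

def pt (x y : ℝ) : Pt := WithLp.toLp 2 ![x, y]

lemma pt_norm_sq (x : Pt) : ‖x‖ ^ 2 = x 0 ^ 2 + x 1 ^ 2 := by
  rw [EuclideanSpace.norm_eq, Real.sq_sqrt (by positivity)]
  simp [Fin.sum_univ_two, sq_abs]

lemma isLine_level (α β c : ℝ) (h : ¬(α = 0 ∧ β = 0)) :
    IsLine {q : Pt | α * q 0 + β * q 1 = c} := by
  have hn : 0 < α ^ 2 + β ^ 2 := by
    rcases not_and_or.mp h with h' | h' <;> positivity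
  set n := α ^ 2 + β ^ 2 with hn'
  have hne : n ≠ 0 := ne_of_gt hn
  refine ⟨pt (α * c / n) (β * c / n), pt (-β) α, ?_, ?_⟩
  · intro h0
    have h1 : pt (-β) α 0 = 0 := by rw [h0]; rfl
    have h2 : pt (-β) α 1 = 0 := by rw [h0]; rfl
    simp only [pt, PiLp.toLp_apply, Matrix.cons_val_zero, Matrix.cons_val_one, Matrix.head_cons] at h1 h2
    exact h ⟨h2, by linarith [neg_eq_zero.mp h1]⟩
  · ext q
    simp only [mem_setOf_eq]
    constructor
    · intro hq
      refine ⟨(α * (q 1 - β * c / n) - β * (q 0 - α * c / n)) / n, PiLp.ext fun i => ?_⟩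
      fin_cases i
      · show q 0 = pt (α * c / n) (β * c / n) 0 + _ * pt (-β) α 0
        simp only [pt, PiLp.toLp_apply, Matrix.cons_val_zero]
        field_simp
        linear_combination α * n * hq - q 0 * n * hn'.symm
      · show q 1 = pt (α * c / n) (β * c / n) 1 + _ * pt (-β) α 1
        simp only [pt, PiLp.toLp_apply, Matrix.cons_val_one, Matrix.head_cons, Matrix.cons_val_fin_one]
        field_simp
        linear_combination β * n * hq - q 1 * n * hn'.symm
    · rintro ⟨t, rfl⟩
      show α * (pt (α * c / n) (β * c / n) 0 + t * pt (-β) α 0)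
          + β * (pt (α * c / n) (β * c / n) 1 + t * pt (-β) α 1) = c
      simp only [pt, PiLp.toLp_apply, Matrix.cons_val_zero, Matrix.cons_val_one, Matrix.head_cons]
      field_simp
      linear_combination c * hn'.symm

lemma mem_uIcc_of_segment {α β : ℝ} {a b p : Pt} (hp : p ∈ segment ℝ a b) :
    α * p 0 + β * p 1 ∈ uIcc (α * a 0 + β * a 1) (α * b 0 + β * b 1) := by
  obtain ⟨u, v, hu, hv, huv, rfl⟩ := hp
  rw [← segment_eq_uIcc]
  refine ⟨u, v, hu, hv, huv, ?_⟩
  have h0 : (u • a + v • b) 0 = u * a 0 + v * b 0 := rfl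
  have h1 : (u • a + v • b) 1 = u * a 1 + v * b 1 := rfl
  simp only [smul_eq_mul, h0, h1]; ring

lemma vol_cover (a b : ℕ → Pt)
    (hbar : IsBarrier (⋃ i, segment ℝ (a i) (b i)) unitSquare)
    (α β : ℝ) (h : ¬(α = 0 ∧ β = 0)) (S T : Set ℝ)
    (hS : ∀ c ∈ S, ∃ q ∈ unitSquare, α * q 0 + β * q 1 = c) :
    volume (S \ T)
      ≤ ∑' i, volume (uIcc (α * a i 0 + β * a i 1) (α * b i 0 + β * b i 1) \ T) := by
  have hsub : S \ T ⊆ ⋃ i, (uIcc (α * a i 0 + β * a i 1) (α * b i 0 + β * b i 1) \ T) := by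
    rintro c ⟨hcS, hcT⟩
    obtain ⟨q, hqU, hqc⟩ := hS c hcS
    obtain ⟨r, hrl, hrΓ⟩ := hbar _ (isLine_level α β c h) ⟨q, hqc, hqU⟩
    obtain ⟨s, ⟨i, rfl⟩, hri⟩ := hrΓ
    exact mem_iUnion.2 ⟨i, hrl ▸ mem_uIcc_of_segment hri, hcT⟩
  exact (measure_mono hsub).trans (measure_iUnion_le _)

lemma strip_bound (a b : Pt) (k m : Fin 2)
    (hnorm : ∀ x : Pt, ‖x‖ ^ 2 = x k ^ 2 + x m ^ 2)
    (hab : a ≠ b)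
    (hX : |(b - a) m| ≤ 10 ^ (-4:ℤ) * ‖b - a‖)
    (I : Set ℝ) :
    μH[1] (segment ℝ a b ∩ {p : Pt | p k ∈ I})
      ≤ ENNReal.ofReal (1 + 2/10^8) * volume (uIcc (a k) (b k) ∩ I) := by
  set Δ : Pt := b - a with hΔdef
  have hΔ : Δ ≠ 0 := sub_ne_zero.2 (Ne.symm hab)
  have hnn : 0 < ‖Δ‖ := norm_pos_iff.2 hΔ
  have hΔk : Δ k = b k - a k := rfl
  have hX' : |Δ m| ≤ 10 ^ (-4:ℤ) * ‖Δ‖ := hX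
  have hsq : ‖Δ‖ ^ 2 = Δ k ^ 2 + Δ m ^ 2 := hnorm Δ
  have hX'' : |Δ m| ≤ (1/10000) * ‖Δ‖ := by
    rw [show ((10:ℝ) ^ (-4:ℤ)) = 1/10000 by norm_num] at hX'
    exact hX'
  have hk2 : ‖Δ‖ ≤ (1 + 2/10^8) * |Δ k| := by
    have h1 : Δ m ^ 2 ≤ (1/10^8) * ‖Δ‖ ^ 2 := by
      nlinarith [mul_self_le_mul_self (abs_nonneg (Δ m)) hX'', sq_abs (Δ m), norm_nonneg Δ]
    nlinarith [sq_abs (Δ k), abs_nonneg (Δ k), hnn]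
  have hkpos : 0 < |Δ k| := by nlinarith
  have hkne : Δ k ≠ 0 := fun h => by rw [h] at hkpos; simp at hkpos
  set K : ℝ := 1 + 2/10^8 with hK
  set g : ℝ → Pt := fun t => a + ((t - a k) / Δ k) • Δ with hg
  have hlip : LipschitzWith (Real.toNNReal K) g := by
    apply LipschitzWith.of_dist_le_mul
    intro s t
    have hst : g s - g t = ((s - t) / Δ k) • Δ := by
      show a + ((s - a k) / Δ k) • Δ - (a + ((t - a k) / Δ k) • Δ) = _
      rw [add_sub_add_left_eq_sub, ← sub_smul]
      congr 1
      field_simp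
      ring
    rw [dist_eq_norm, hst, norm_smul, Real.dist_eq,
      Real.coe_toNNReal _ (by positivity), Real.norm_eq_abs, abs_div]
    rw [div_mul_eq_mul_div, div_le_iff₀ hkpos]
    nlinarith [abs_nonneg (s - t), hk2, hkpos]
  have himg : segment ℝ a b ∩ {p : Pt | p k ∈ I} ⊆ g '' (uIcc (a k) (b k) ∩ I) := by
    rintro p ⟨hseg, hpI⟩
    rw [segment_eq_image'] at hseg
    obtain ⟨u, hu, rfl⟩ := hseg
    have hpk : (a + u • (b - a)) k = a k + u * Δ k := by
      rw [PiLp.add_apply, PiLp.smul_apply, smul_eq_mul, hΔdef]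
    have hbk : b k = a k + 1 * Δ k := by rw [hΔk]; ring
    refine ⟨(a + u • (b - a)) k, ⟨?_, hpI⟩, ?_⟩
    · rw [hpk]
      rcases le_total 0 (Δ k) with h|h
      · exact mem_uIcc.2 (Or.inl ⟨by nlinarith [hu.1], by rw [hbk]; nlinarith [hu.2]⟩)
      · exact mem_uIcc.2 (Or.inr ⟨by rw [hbk]; nlinarith [hu.2], by nlinarith [hu.1]⟩)
    · show a + (((a + u • (b - a)) k - a k) / Δ k) • Δ = a + u • (b - a)
      rw [hpk]
      congr 1
      rw [show a k + u * Δ k - a k = u * Δ k by ring, mul_div_assoc, div_self hkne, mul_one]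
  calc μH[1] (segment ℝ a b ∩ {p : Pt | p k ∈ I})
      ≤ μH[1] (g '' (uIcc (a k) (b k) ∩ I)) := measure_mono himg
    _ ≤ (Real.toNNReal K : ℝ≥0∞) ^ (1:ℝ) * μH[1] (uIcc (a k) (b k) ∩ I) :=
        hlip.hausdorffMeasure_image_le zero_le_one _
    _ = ENNReal.ofReal K * volume (uIcc (a k) (b k) ∩ I) := by
        rw [ENNReal.rpow_one, hausdorffMeasure_real]
        rfl

lemma abs_le_of_sq {L u v : ℝ} (h : L ^ 2 = u ^ 2 + v ^ 2) (hL : 0 ≤ L) : |u| ≤ L := by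
  nlinarith [abs_nonneg u, sq_abs u, sq_nonneg v]

lemma core (a b : ℕ → Pt) (hab : ∀ i, a i ≠ b i)
    (hbar : IsBarrier (⋃ i, segment ℝ (a i) (b i)) unitSquare)
    (hsum : Summable fun i => ‖b i - a i‖)
    (hL : ∑' i, ‖b i - a i‖ ≤ 2 + 10 ^ (-12 : ℤ))
    (k m : Fin 2)
    (hnorm : ∀ x : Pt, ‖x‖ ^ 2 = x k ^ 2 + x m ^ 2)
    (hmax : ∀ x : Pt, max |x 0| |x 1| = max |x k| |x m|)
    (αk βk : ℝ) (hk0 : ¬(αk = 0 ∧ βk = 0)) (hk : ∀ p : Pt, αk * p 0 + βk * p 1 = p k)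
    (αm βm : ℝ) (hm0 : ¬(αm = 0 ∧ βm = 0)) (hm : ∀ p : Pt, αm * p 0 + βm * p 1 = p m)
    (witk : ∀ c ∈ Icc (0:ℝ) 1, ∃ q ∈ unitSquare, q k = c)
    (witm : ∀ c ∈ Icc (0:ℝ) 1, ∃ q ∈ unitSquare, q m = c)
    (I : Set ℝ) (hI : I.OrdConnected) :
    ∑' i : {j : ℕ // |(b j - a j) m| ≤ 10 ^ (-4:ℤ) * ‖b j - a j‖},
        μH[1] (segment ℝ (a i.1) (b i.1) ∩ {p : Pt | p k ∈ I})
      ≤ volume (I ∩ Icc (0:ℝ) 1) + ENNReal.ofReal (5 * 10 ^ (-4:ℤ)) := by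
  classical
  have hε : ((10:ℝ) ^ (-4:ℤ)) = 1/10000 := by norm_num
  have hδ : ((10:ℝ) ^ (-12:ℤ)) = 1/10 ^ 12 := by norm_num
  set PX : ℕ → Prop := fun i => |(b i - a i) m| ≤ (10:ℝ) ^ (-4:ℤ) * ‖b i - a i‖ with hPX
  set PY : ℕ → Prop := fun i => |(b i - a i) k| ≤ (10:ℝ) ^ (-4:ℤ) * ‖b i - a i‖ with hPY
  set PZ : ℕ → Prop := fun i => ¬ PX i ∧ ¬ PY i with hPZ
  set len : ℕ → ℝ≥0∞ := fun i => ENNReal.ofReal ‖b i - a i‖ with hlen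
  set lk : ℕ → ℝ≥0∞ := fun i => ENNReal.ofReal |(b i - a i) k| with hlk
  set lm : ℕ → ℝ≥0∞ := fun i => ENNReal.ofReal |(b i - a i) m| with hlm
  set mx : ℕ → ℝ≥0∞ := fun i => ENNReal.ofReal (max |(b i - a i) 0| |(b i - a i) 1|) with hmx
  have lk_def : ∀ i, lk i = ENNReal.ofReal |(b i - a i) k| := fun i => by simp only [hlk]
  have lm_def : ∀ i, lm i = ENNReal.ofReal |(b i - a i) m| := fun i => by simp only [hlm]
  have mx_def : ∀ i, mx i = ENNReal.ofReal (max |(b i - a i) 0| |(b i - a i) 1|) :=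
    fun i => by simp only [hmx]
  have len_def : ∀ i, len i = ENNReal.ofReal ‖b i - a i‖ := fun i => by simp only [hlen]
  have hnpos : ∀ i, 0 < ‖b i - a i‖ :=
    fun i => norm_pos_iff.2 (sub_ne_zero.2 (Ne.symm (hab i)))
  -- not both PX and PY
  have hPXY : ∀ i, ¬ (PX i ∧ PY i) := by
    rintro i ⟨h1, h2⟩
    rw [hPX] at h1; rw [hPY] at h2
    simp only [hε] at h1 h2
    nlinarith [hnorm (b i - a i), sq_abs ((b i - a i) k), sq_abs ((b i - a i) m),
      hnpos i, abs_nonneg ((b i - a i) k), abs_nonneg ((b i - a i) m)]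
  have hlk_le : ∀ i, lk i ≤ len i := fun i =>
    ENNReal.ofReal_le_ofReal (abs_le_of_sq (hnorm (b i - a i)) (norm_nonneg _))
  have hlm_le : ∀ i, lm i ≤ len i := fun i =>
    ENNReal.ofReal_le_ofReal
      (abs_le_of_sq (v := (b i - a i) k) (by rw [hnorm (b i - a i)]; ring) (norm_nonneg _))
  have hmx_le : ∀ i, mx i ≤ len i := by
    intro i
    apply ENNReal.ofReal_le_ofReal
    rw [hmax (b i - a i)]
    exact max_le (abs_le_of_sq (hnorm _) (norm_nonneg _))
      (abs_le_of_sq (v := (b i - a i) k) (by rw [hnorm (b i - a i)]; ring) (norm_nonneg _))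
  -- total length
  have htot : ∑' i, len i ≤ ENNReal.ofReal (2 + 1/10 ^ 12) := by
    rw [hlen, ← ENNReal.ofReal_tsum_of_nonneg (fun i => norm_nonneg _) hsum]
    exact ENNReal.ofReal_le_ofReal (by rw [← hδ]; exact hL)
  -- generic splitting
  have split2 : ∀ g : ℕ → ℝ≥0∞,
      ∑' i, g i = (∑' i, if PX i then g i else 0) + ∑' i, if ¬ PX i then g i else 0 := by
    intro g
    rw [← ENNReal.tsum_add]
    refine tsum_congr fun i => ?_
    by_cases h1 : PX i <;> simp [h1]
  have split2Y : ∀ g : ℕ → ℝ≥0∞,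
      ∑' i, g i = (∑' i, if PY i then g i else 0) + ∑' i, if ¬ PY i then g i else 0 := by
    intro g
    rw [← ENNReal.tsum_add]
    refine tsum_congr fun i => ?_
    by_cases h1 : PY i <;> simp [h1]
  have split3 : ∀ g : ℕ → ℝ≥0∞,
      ∑' i, g i = (∑' i, if PX i then g i else 0) +
        ((∑' i, if PY i then g i else 0) + ∑' i, if PZ i then g i else 0) := by
    intro g
    rw [← ENNReal.tsum_add, ← ENNReal.tsum_add]
    refine tsum_congr fun i => ?_
    by_cases h1 : PX i <;> by_cases h2 : PY i
    · exact absurd ⟨h1, h2⟩ (hPXY i)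
    · simp [hPZ, h1, h2]
    · simp [hPZ, h1, h2]
    · simp [hPZ, h1, h2]
  -- coverage in directions k and m
  have hcovk : 1 ≤ ∑' i, lk i := by
    have hw : ∀ c ∈ Icc (0:ℝ) 1, ∃ q ∈ unitSquare, αk * q 0 + βk * q 1 = c := by
      intro c hc
      obtain ⟨q, hqU, hqc⟩ := witk c hc
      exact ⟨q, hqU, by rw [hk q, hqc]⟩
    have := vol_cover a b hbar αk βk hk0 (Icc 0 1) ∅ hw
    rw [diff_empty, Real.volume_Icc] at this
    norm_num at this
    refine le_trans this (le_of_eq (tsum_congr fun i => ?_))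
    rw [hk (a i), hk (b i), lk_def i]
    congr 1
  have hcovm : 1 ≤ ∑' i, lm i := by
    have hw : ∀ c ∈ Icc (0:ℝ) 1, ∃ q ∈ unitSquare, αm * q 0 + βm * q 1 = c := by
      intro c hc
      obtain ⟨q, hqU, hqc⟩ := witm c hc
      exact ⟨q, hqU, by rw [hm q, hqc]⟩
    have := vol_cover a b hbar αm βm hm0 (Icc 0 1) ∅ hw
    rw [diff_empty, Real.volume_Icc] at this
    norm_num at this
    refine le_trans this (le_of_eq (tsum_congr fun i => ?_))
    rw [hm (a i), hm (b i), lm_def i]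
    congr 1
  -- diagonal coverage
  have hd1 : 2 ≤ ∑' i, ENNReal.ofReal |(b i - a i) 0 + (b i - a i) 1| := by
    have hw : ∀ c ∈ Icc (0:ℝ) 2, ∃ q ∈ unitSquare, 1 * q 0 + 1 * q 1 = c := by
      intro c hc
      obtain ⟨hc1, hc2⟩ := hc
      have h0 : pt (c/2) (c/2) 0 = c/2 := rfl
      have h1 : pt (c/2) (c/2) 1 = c/2 := rfl
      exact ⟨pt (c/2) (c/2),
        ⟨by rw [h0]; exact ⟨by linarith, by linarith⟩,
         by rw [h1]; exact ⟨by linarith, by linarith⟩⟩,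
        by rw [h0, h1]; ring⟩
    have := vol_cover a b hbar 1 1 (by norm_num) (Icc 0 2) ∅ hw
    rw [diff_empty, Real.volume_Icc] at this
    norm_num at this
    refine le_trans this (le_of_eq (tsum_congr fun i => ?_))
    congr 1
    simp only [PiLp.sub_apply]
    ring
  have hd2 : 2 ≤ ∑' i, ENNReal.ofReal |(b i - a i) 0 - (b i - a i) 1| := by
    have hw : ∀ c ∈ Icc (-1:ℝ) 1, ∃ q ∈ unitSquare, 1 * q 0 + (-1) * q 1 = c := by
      intro c hc
      obtain ⟨hc1, hc2⟩ := hc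
      have h0 : pt ((1+c)/2) ((1-c)/2) 0 = (1+c)/2 := rfl
      have h1 : pt ((1+c)/2) ((1-c)/2) 1 = (1-c)/2 := rfl
      exact ⟨pt ((1+c)/2) ((1-c)/2),
        ⟨by rw [h0]; exact ⟨by linarith, by linarith⟩,
         by rw [h1]; exact ⟨by linarith, by linarith⟩⟩,
        by rw [h0, h1]; ring⟩
    have := vol_cover a b hbar 1 (-1) (by norm_num) (Icc (-1) 1) ∅ hw
    rw [diff_empty, Real.volume_Icc] at this
    norm_num at this
    refine le_trans this (le_of_eq (tsum_congr fun i => ?_))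
    congr 1
    simp only [PiLp.sub_apply]
    ring
  -- sum of maxima at least 2
  have hmx2 : 2 ≤ ∑' i, mx i := by
    have h4 : (4:ℝ≥0∞) ≤ ∑' i, (ENNReal.ofReal |(b i - a i) 0 + (b i - a i) 1|
        + ENNReal.ofReal |(b i - a i) 0 - (b i - a i) 1|) := by
      rw [ENNReal.tsum_add]
      calc (4:ℝ≥0∞) = 2 + 2 := by norm_num
      _ ≤ _ := add_le_add hd1 hd2
    have h5 : ∀ i, ENNReal.ofReal |(b i - a i) 0 + (b i - a i) 1|
        + ENNReal.ofReal |(b i - a i) 0 - (b i - a i) 1| ≤ 2 * mx i := by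
      intro i
      rw [← ENNReal.ofReal_add (abs_nonneg _) (abs_nonneg _), mx_def i]
      rw [show (2:ℝ≥0∞) * ENNReal.ofReal (max |(b i - a i) 0| |(b i - a i) 1|)
          = ENNReal.ofReal (2 * max |(b i - a i) 0| |(b i - a i) 1|) by
        rw [ENNReal.ofReal_mul (by norm_num), ENNReal.ofReal_ofNat]]
      apply ENNReal.ofReal_le_ofReal
      rcases abs_cases ((b i - a i) 0 + (b i - a i) 1) with ⟨h1,_⟩|⟨h1,_⟩ <;>
        rcases abs_cases ((b i - a i) 0 - (b i - a i) 1) with ⟨h2,_⟩|⟨h2,_⟩ <;>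
        rcases max_cases |(b i - a i) 0| |(b i - a i) 1| with ⟨h3,h4⟩|⟨h3,h4⟩ <;>
        rcases abs_cases ((b i - a i) 0) with ⟨h5,_⟩|⟨h5,_⟩ <;>
        rcases abs_cases ((b i - a i) 1) with ⟨h6,_⟩|⟨h6,_⟩ <;> linarith
    have h6 : (4:ℝ≥0∞) ≤ 2 * ∑' i, mx i := by
      rw [← ENNReal.tsum_mul_left]
      exact h4.trans (ENNReal.tsum_le_tsum h5)
    exact (ENNReal.mul_le_mul_iff_right (a := (2:ℝ≥0∞)) (by norm_num) (by norm_num)).mp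
      (le_trans (le_of_eq (by norm_num)) h6)
  -- factoring constants out of conditional sums
  have factor : ∀ (P : ℕ → Prop) (inst : ∀ i, Decidable (P i)) (g : ℕ → ℝ≥0∞) (c : ℝ≥0∞),
      (∑' i, @ite _ (P i) (inst i) (c * g i) 0) = c * ∑' i, @ite _ (P i) (inst i) (g i) 0 := by
    intro P inst g c
    rw [← ENNReal.tsum_mul_left]
    refine tsum_congr fun i => ?_
    by_cases h : P i
    · rw [if_pos h, if_pos h]
    · rw [if_neg h, if_neg h, mul_zero]
  -- Z length bound
  have hZlen : (∑' i, if PZ i then len i else 0) ≤ ENNReal.ofReal (1/5000) := by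
    have hper : ∀ i, mx i + ENNReal.ofReal (1/(2*10^8)) * (if PZ i then len i else 0)
        ≤ len i := by
      intro i
      by_cases hz : PZ i
      · rw [if_pos hz]
        have hz' : ¬ PX i ∧ ¬ PY i := by rw [hPZ] at hz; exact hz
        have h1 : (1/10000:ℝ) * ‖b i - a i‖ < |(b i - a i) m| := by
          have := hz'.1
          rw [hPX] at this
          simp only [hε] at this
          linarith [not_le.mp this]
        have h2 : (1/10000:ℝ) * ‖b i - a i‖ < |(b i - a i) k| := by
          have := hz'.2
          rw [hPY] at this
          simp only [hε] at this
          linarith [not_le.mp this]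
        have hkb : |(b i - a i) k| ≤ (1 - 1/(2*10^8)) * ‖b i - a i‖ := by
          nlinarith [hnorm (b i - a i), sq_abs ((b i - a i) k), sq_abs ((b i - a i) m),
            hnpos i, abs_nonneg ((b i - a i) k)]
        have hmb : |(b i - a i) m| ≤ (1 - 1/(2*10^8)) * ‖b i - a i‖ := by
          nlinarith [hnorm (b i - a i), sq_abs ((b i - a i) k), sq_abs ((b i - a i) m),
            hnpos i, abs_nonneg ((b i - a i) m)]
        rw [mx_def i, len_def i, ← ENNReal.ofReal_mul (by norm_num),
          ← ENNReal.ofReal_add (le_max_of_le_left (abs_nonneg _)) (by positivity)]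
        apply ENNReal.ofReal_le_ofReal
        rw [hmax (b i - a i)]
        have := max_le hkb hmb
        nlinarith [hnpos i]
      · rw [if_neg hz, mul_zero, add_zero]
        exact hmx_le i
    have hsum2 : (∑' i, mx i) + ENNReal.ofReal (1/(2*10^8)) * (∑' i, if PZ i then len i else 0)
        ≤ 2 + ENNReal.ofReal (1/10^12) := by
      rw [← ENNReal.tsum_mul_left, ← ENNReal.tsum_add]
      refine le_trans (ENNReal.tsum_le_tsum hper) (le_trans htot (le_of_eq ?_))
      rw [ENNReal.ofReal_add (by norm_num) (by norm_num), ENNReal.ofReal_ofNat]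
    have hcancel : ENNReal.ofReal (1/(2*10^8)) * (∑' i, if PZ i then len i else 0)
        ≤ ENNReal.ofReal (1/10^12) := by
      refine (ENNReal.add_le_add_iff_left (a := (2:ℝ≥0∞)) (by norm_num)).mp ?_
      exact le_trans (add_le_add hmx2 le_rfl) hsum2
    refine (ENNReal.mul_le_mul_iff_right (a := ENNReal.ofReal (1/(2*10^8)))
      (ENNReal.ofReal_pos.mpr (by norm_num)).ne' ENNReal.ofReal_ne_top).mp ?_
    refine le_trans hcancel (le_of_eq ?_)
    rw [← ENNReal.ofReal_mul (by norm_num)]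
    norm_num
  -- X/Y refined length bounds
  have epsmulX : ∀ i, PX i → lm i ≤ ENNReal.ofReal (1/10000) * len i := by
    intro i hx
    rw [lm_def i, len_def i, ← ENNReal.ofReal_mul (by norm_num)]
    apply ENNReal.ofReal_le_ofReal
    rw [hPX] at hx
    simp only [hε] at hx
    exact hx
  have epsmulY : ∀ i, PY i → lk i ≤ ENNReal.ofReal (1/10000) * len i := by
    intro i hx
    rw [lk_def i, len_def i, ← ENNReal.ofReal_mul (by norm_num)]
    apply ENNReal.ofReal_le_ofReal
    rw [hPY] at hx
    simp only [hε] at hx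
    exact hx
  have stepX : ∀ x : ℝ, 0 ≤ x → (∑' i, if PX i then lm i else 0) ≤ ENNReal.ofReal x →
      (∑' i, if PX i then len i else 0) ≤ ENNReal.ofReal (1 + 1/10^12 + x) := by
    intro x hx hbound
    have hlm_split : (1:ℝ≥0∞) ≤ (∑' i, if PX i then lm i else 0)
        + (∑' i, if ¬ PX i then len i else 0) := by
      refine le_trans hcovm ?_
      rw [split2 lm]
      exact add_le_add le_rfl (ENNReal.tsum_le_tsum fun i => by
        by_cases h : PX i <;> simp [h, hlm_le i])
    have key : (∑' i, if PX i then len i else 0) + 1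
        ≤ ENNReal.ofReal (1 + 1/10^12 + x) + 1 := by
      calc (∑' i, if PX i then len i else 0) + 1
          ≤ (∑' i, if PX i then len i else 0) + ((∑' i, if PX i then lm i else 0)
            + (∑' i, if ¬ PX i then len i else 0)) := add_le_add le_rfl hlm_split
        _ = ((∑' i, if PX i then len i else 0) + (∑' i, if ¬ PX i then len i else 0))
            + (∑' i, if PX i then lm i else 0) := by ring
        _ ≤ ENNReal.ofReal (2 + 1/10^12) + ENNReal.ofReal x := by
            refine add_le_add ?_ hbound
            rw [← split2 len]
            exact htot
        _ = ENNReal.ofReal (1 + 1/10^12 + x) + 1 := by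
            rw [← ENNReal.ofReal_add (by norm_num) hx, ← ENNReal.ofReal_one,
              ← ENNReal.ofReal_add (by positivity) (by norm_num)]
            congr 1
            ring
    exact (ENNReal.add_le_add_iff_right ENNReal.one_ne_top).mp key
  -- crude and refined X bounds
  have crudeX : (∑' i, if PX i then lm i else 0) ≤ ENNReal.ofReal (21/10^5) := by
    have h1 : (∑' i, if PX i then lm i else 0)
        ≤ ENNReal.ofReal (1/10000) * ∑' i, len i := by
      rw [← ENNReal.tsum_mul_left]
      refine ENNReal.tsum_le_tsum fun i => ?_
      by_cases hp : PX i
      · rw [if_pos hp]; exact epsmulX i hp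
      · rw [if_neg hp]; exact zero_le
    refine le_trans h1 (le_trans (mul_le_mul_right htot _) ?_)
    rw [← ENNReal.ofReal_mul (by norm_num)]
    exact ENNReal.ofReal_le_ofReal (by norm_num)
  have SX1 : (∑' i, if PX i then len i else 0)
      ≤ ENNReal.ofReal (1 + 1/10^12 + 21/10^5) := stepX _ (by norm_num) crudeX
  have fineX : (∑' i, if PX i then lm i else 0) ≤ ENNReal.ofReal (11/10^5) := by
    have h1 : (∑' i, if PX i then lm i else 0)
        ≤ ENNReal.ofReal (1/10000) * ∑' i, if PX i then len i else 0 := by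
      rw [← ENNReal.tsum_mul_left]
      refine ENNReal.tsum_le_tsum fun i => ?_
      by_cases hp : PX i
      · rw [if_pos hp, if_pos hp]; exact epsmulX i hp
      · rw [if_neg hp, if_neg hp, mul_zero]
    refine le_trans h1 (le_trans (mul_le_mul_right SX1 _) ?_)
    rw [← ENNReal.ofReal_mul (by norm_num)]
    exact ENNReal.ofReal_le_ofReal (by norm_num)
  have SX2 : (∑' i, if PX i then len i else 0)
      ≤ ENNReal.ofReal (1 + 1/10^12 + 11/10^5) := stepX _ (by norm_num) fineX
  have hXlk : (∑' i, if PX i then lk i else 0)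
      ≤ ENNReal.ofReal (1 + 1/10^12 + 11/10^5) := by
    refine le_trans (ENNReal.tsum_le_tsum (fun i => ?_)) SX2
    by_cases hp : PX i
    · rw [if_pos hp, if_pos hp]; exact hlk_le i
    · rw [if_neg hp, if_neg hp]
  -- Y side
  have stepY : ∀ x : ℝ, 0 ≤ x → (∑' i, if PY i then lk i else 0) ≤ ENNReal.ofReal x →
      (∑' i, if PY i then len i else 0) ≤ ENNReal.ofReal (1 + 1/10^12 + x) := by
    intro x hx hbound
    have hlk_split : (1:ℝ≥0∞) ≤ (∑' i, if PY i then lk i else 0)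
        + (∑' i, if ¬ PY i then len i else 0) := by
      refine le_trans hcovk ?_
      rw [split2Y lk]
      exact add_le_add le_rfl (ENNReal.tsum_le_tsum fun i => by
        by_cases h : PY i <;> simp [h, hlk_le i])
    have key : (∑' i, if PY i then len i else 0) + 1
        ≤ ENNReal.ofReal (1 + 1/10^12 + x) + 1 := by
      calc (∑' i, if PY i then len i else 0) + 1
          ≤ (∑' i, if PY i then len i else 0) + ((∑' i, if PY i then lk i else 0)
            + (∑' i, if ¬ PY i then len i else 0)) := add_le_add le_rfl hlk_split
        _ = ((∑' i, if PY i then len i else 0) + (∑' i, if ¬ PY i then len i else 0))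
            + (∑' i, if PY i then lk i else 0) := by ring
        _ ≤ ENNReal.ofReal (2 + 1/10^12) + ENNReal.ofReal x := by
            refine add_le_add ?_ hbound
            rw [← split2Y len]
            exact htot
        _ = ENNReal.ofReal (1 + 1/10^12 + x) + 1 := by
            rw [← ENNReal.ofReal_add (by norm_num) hx, ← ENNReal.ofReal_one,
              ← ENNReal.ofReal_add (by positivity) (by norm_num)]
            congr 1
            ring
    exact (ENNReal.add_le_add_iff_right ENNReal.one_ne_top).mp key
  have crudeY : (∑' i, if PY i then lk i else 0) ≤ ENNReal.ofReal (21/10^5) := by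
    have h1 : (∑' i, if PY i then lk i else 0)
        ≤ ENNReal.ofReal (1/10000) * ∑' i, len i := by
      rw [← ENNReal.tsum_mul_left]
      refine ENNReal.tsum_le_tsum fun i => ?_
      by_cases hp : PY i
      · rw [if_pos hp]; exact epsmulY i hp
      · rw [if_neg hp]; exact zero_le
    refine le_trans h1 (le_trans (mul_le_mul_right htot _) ?_)
    rw [← ENNReal.ofReal_mul (by norm_num)]
    exact ENNReal.ofReal_le_ofReal (by norm_num)
  have SY1 : (∑' i, if PY i then len i else 0)
      ≤ ENNReal.ofReal (1 + 1/10^12 + 21/10^5) := stepY _ (by norm_num) crudeY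
  have fineY : (∑' i, if PY i then lk i else 0) ≤ ENNReal.ofReal (11/10^5) := by
    have h1 : (∑' i, if PY i then lk i else 0)
        ≤ ENNReal.ofReal (1/10000) * ∑' i, if PY i then len i else 0 := by
      rw [← ENNReal.tsum_mul_left]
      refine ENNReal.tsum_le_tsum fun i => ?_
      by_cases hp : PY i
      · rw [if_pos hp, if_pos hp]; exact epsmulY i hp
      · rw [if_neg hp, if_neg hp, mul_zero]
    refine le_trans h1 (le_trans (mul_le_mul_right SY1 _) ?_)
    rw [← ENNReal.ofReal_mul (by norm_num)]
    exact ENNReal.ofReal_le_ofReal (by norm_num)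
  -- strip coverage and additivity
  have hImeas : MeasurableSet I := hI.measurableSet
  have hwk : ∀ c ∈ Icc (0:ℝ) 1, ∃ q ∈ unitSquare, αk * q 0 + βk * q 1 = c := by
    intro c hc
    obtain ⟨q, hqU, hqc⟩ := witk c hc
    exact ⟨q, hqU, by rw [hk q, hqc]⟩
  have hcovW : volume (Icc (0:ℝ) 1 \ I) ≤ ∑' i, volume (uIcc (a i k) (b i k) \ I) := by
    refine le_trans (vol_cover a b hbar αk βk hk0 (Icc 0 1) I hwk)
      (le_of_eq (tsum_congr fun i => ?_))
    rw [hk (a i), hk (b i)]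
  have hOut_le_lk : ∀ i, volume (uIcc (a i k) (b i k) \ I) ≤ lk i := by
    intro i
    refine le_trans (measure_mono diff_subset) ?_
    rw [Real.volume_interval, lk_def i]
    exact le_of_eq (by congr 1)
  have hIn_Out : ∀ i, volume (uIcc (a i k) (b i k) ∩ I)
      + volume (uIcc (a i k) (b i k) \ I) = lk i := by
    intro i
    rw [measure_inter_add_diff _ hImeas, Real.volume_interval, lk_def i]
    congr 1
  have hVW : volume (I ∩ Icc (0:ℝ) 1) + volume (Icc (0:ℝ) 1 \ I) = 1 := by
    rw [inter_comm, measure_inter_add_diff _ hImeas, Real.volume_Icc]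
    norm_num
  have hWfin : volume (Icc (0:ℝ) 1 \ I) ≠ ⊤ :=
    ne_top_of_le_ne_top ENNReal.one_ne_top (le_trans le_add_self hVW.le)
  have hV1 : volume (I ∩ Icc (0:ℝ) 1) ≤ 1 := le_trans le_self_add hVW.le
  have hYout : (∑' i, if PY i then volume (uIcc (a i k) (b i k) \ I) else 0)
      ≤ ENNReal.ofReal (11/10^5) := by
    refine le_trans (ENNReal.tsum_le_tsum (fun i => ?_)) fineY
    by_cases hp : PY i
    · rw [if_pos hp, if_pos hp]; exact hOut_le_lk i
    · rw [if_neg hp, if_neg hp]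
  have hZout : (∑' i, if PZ i then volume (uIcc (a i k) (b i k) \ I) else 0)
      ≤ ENNReal.ofReal (1/5000) := by
    refine le_trans (ENNReal.tsum_le_tsum (fun i => ?_)) hZlen
    by_cases hp : PZ i
    · rw [if_pos hp, if_pos hp]; exact le_trans (hOut_le_lk i) (hlk_le i)
    · rw [if_neg hp, if_neg hp]
  have hPD : (∑' i, if PX i then volume (uIcc (a i k) (b i k) ∩ I) else 0)
      + (∑' i, if PX i then volume (uIcc (a i k) (b i k) \ I) else 0)
      = ∑' i, if PX i then lk i else 0 := by
    rw [← ENNReal.tsum_add]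
    refine tsum_congr fun i => ?_
    by_cases hp : PX i
    · rw [if_pos hp, if_pos hp, if_pos hp]; exact hIn_Out i
    · rw [if_neg hp, if_neg hp, if_neg hp, add_zero]
  have hPV : (∑' i, if PX i then volume (uIcc (a i k) (b i k) ∩ I) else 0)
      ≤ volume (I ∩ Icc (0:ℝ) 1) + ENNReal.ofReal (43/10^5) := by
    refine (ENNReal.add_le_add_iff_right hWfin).mp ?_
    have c1 : (∑' i, if PX i then volume (uIcc (a i k) (b i k) ∩ I) else 0)
        + volume (Icc (0:ℝ) 1 \ I)
        ≤ (∑' i, if PX i then lk i else 0)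
          + (ENNReal.ofReal (11/10^5) + ENNReal.ofReal (1/5000)) := by
      calc (∑' i, if PX i then volume (uIcc (a i k) (b i k) ∩ I) else 0)
            + volume (Icc (0:ℝ) 1 \ I)
          ≤ (∑' i, if PX i then volume (uIcc (a i k) (b i k) ∩ I) else 0)
            + ((∑' i, if PX i then volume (uIcc (a i k) (b i k) \ I) else 0)
              + ((∑' i, if PY i then volume (uIcc (a i k) (b i k) \ I) else 0)
                + (∑' i, if PZ i then volume (uIcc (a i k) (b i k) \ I) else 0))) := by
            refine add_le_add le_rfl (le_trans hcovW (le_of_eq (split3 _)))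
        _ = ((∑' i, if PX i then volume (uIcc (a i k) (b i k) ∩ I) else 0)
            + (∑' i, if PX i then volume (uIcc (a i k) (b i k) \ I) else 0))
            + ((∑' i, if PY i then volume (uIcc (a i k) (b i k) \ I) else 0)
              + (∑' i, if PZ i then volume (uIcc (a i k) (b i k) \ I) else 0)) := by ring
        _ ≤ _ := add_le_add (le_of_eq hPD) (add_le_add hYout hZout)
    refine le_trans c1 ?_
    calc (∑' i, if PX i then lk i else 0)
          + (ENNReal.ofReal (11/10^5) + ENNReal.ofReal (1/5000))
        ≤ ENNReal.ofReal (1 + 1/10^12 + 11/10^5)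
          + (ENNReal.ofReal (11/10^5) + ENNReal.ofReal (1/5000)) := add_le_add hXlk le_rfl
      _ = ENNReal.ofReal ((1 + 1/10^12 + 11/10^5) + (11/10^5 + 1/5000)) := by
          rw [← ENNReal.ofReal_add (by norm_num) (by norm_num),
            ← ENNReal.ofReal_add (by positivity) (by norm_num)]
      _ ≤ ENNReal.ofReal (1 + 43/10^5) := ENNReal.ofReal_le_ofReal (by norm_num)
      _ = (volume (I ∩ Icc (0:ℝ) 1) + ENNReal.ofReal (43/10^5))
          + volume (Icc (0:ℝ) 1 \ I) := by
          rw [ENNReal.ofReal_add (by norm_num) (by norm_num), ENNReal.ofReal_one]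
          calc (1:ℝ≥0∞) + ENNReal.ofReal (43/10^5)
              = (volume (I ∩ Icc (0:ℝ) 1) + volume (Icc (0:ℝ) 1 \ I))
                + ENNReal.ofReal (43/10^5) := by rw [hVW]
            _ = _ := by ring
  -- final assembly
  calc ∑' i : {j : ℕ // |(b j - a j) m| ≤ 10 ^ (-4:ℤ) * ‖b j - a j‖},
        μH[1] (segment ℝ (a i.1) (b i.1) ∩ {p : Pt | p k ∈ I})
      = ∑' i : ℕ, if PX i then μH[1] (segment ℝ (a i) (b i) ∩ {p : Pt | p k ∈ I}) else 0 := by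
        refine (tsum_subtype {j : ℕ | PX j}
          (fun i => μH[1] (segment ℝ (a i) (b i) ∩ {p : Pt | p k ∈ I}))).trans
          (tsum_congr fun i => ?_)
        by_cases hp : PX i <;> simp [Set.indicator_apply, hp]
    _ ≤ ∑' i : ℕ, if PX i then
          ENNReal.ofReal (1 + 2/10^8) * volume (uIcc (a i k) (b i k) ∩ I) else 0 := by
        refine ENNReal.tsum_le_tsum fun i => ?_
        by_cases hp : PX i
        · rw [if_pos hp, if_pos hp]
          have hx : |(b i - a i) m| ≤ 10 ^ (-4:ℤ) * ‖b i - a i‖ := by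
            rw [hPX] at hp; exact hp
          exact strip_bound (a i) (b i) k m hnorm (hab i) hx I
        · rw [if_neg hp, if_neg hp]
    _ = ENNReal.ofReal (1 + 2/10^8)
          * ∑' i : ℕ, if PX i then volume (uIcc (a i k) (b i k) ∩ I) else 0 :=
        factor PX _ _ _
    _ ≤ ENNReal.ofReal (1 + 2/10^8)
          * (volume (I ∩ Icc (0:ℝ) 1) + ENNReal.ofReal (43/10^5)) := mul_le_mul_right hPV _
    _ ≤ volume (I ∩ Icc (0:ℝ) 1) + ENNReal.ofReal (5 * 10 ^ (-4:ℤ)) := by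
        rw [mul_add]
        have e1 : ENNReal.ofReal (1 + 2/10^8) * volume (I ∩ Icc (0:ℝ) 1)
            ≤ volume (I ∩ Icc (0:ℝ) 1) + ENNReal.ofReal (2/10^8) := by
          rw [ENNReal.ofReal_add (by norm_num) (by norm_num), ENNReal.ofReal_one,
            add_mul, one_mul]
          exact add_le_add le_rfl (le_trans (mul_le_mul_right hV1 _) (le_of_eq (mul_one _)))
        have e2 : ENNReal.ofReal (1 + 2/10^8) * ENNReal.ofReal (43/10^5)
            ≤ ENNReal.ofReal (44/10^5) := by
          rw [← ENNReal.ofReal_mul (by norm_num)]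
          exact ENNReal.ofReal_le_ofReal (by norm_num)
        refine le_trans (add_le_add e1 e2) ?_
        rw [add_assoc]
        refine add_le_add le_rfl ?_
        rw [← ENNReal.ofReal_add (by norm_num) (by norm_num)]
        exact ENNReal.ofReal_le_ofReal (by norm_num)

/-- Lemma 6: for a segment barrier of the unit square of total length at most
2 + δ (δ = 10⁻¹², sin φ = 10⁻⁴), for any intervals I, J ⊆ ℝ, the part of the almost
horizontal segments X inside the vertical strip I × ℝ has total length at most
λ(I ∩ [0,1]) + 5 sin φ, and the part of the almost vertical segments Y inside the
horizontal strip ℝ × J has total length at most λ(J ∩ [0,1]) + 5 sin φ. -/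
theorem X_in_strip_Y_in_strip_bounds
    (a b : ℕ → Pt) (hab : ∀ i, a i ≠ b i)
    (hbar : IsBarrier (⋃ i, segment ℝ (a i) (b i)) unitSquare)
    (hsum : Summable fun i => ‖b i - a i‖)
    (hL : ∑' i, ‖b i - a i‖ ≤ 2 + 10 ^ (-12 : ℤ)) :
    (∀ I : Set ℝ, I.OrdConnected →
      ∑' i : {j : ℕ // AlmostHorizontal (a j) (b j)},
          μH[1] (segment ℝ (a i.1) (b i.1) ∩ {p : Pt | p 0 ∈ I})
        ≤ volume (I ∩ Icc (0:ℝ) 1) + ENNReal.ofReal (5 * 10 ^ (-4 : ℤ))) ∧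
    (∀ J : Set ℝ, J.OrdConnected →
      ∑' i : {j : ℕ // AlmostVertical (a j) (b j)},
          μH[1] (segment ℝ (a i.1) (b i.1) ∩ {p : Pt | p 1 ∈ J})
        ≤ volume (J ∩ Icc (0:ℝ) 1) + ENNReal.ofReal (5 * 10 ^ (-4 : ℤ))) := by
  constructor
  · intro I hI
    exact core a b hab hbar hsum hL 0 1 pt_norm_sq (fun x => rfl)
      1 0 (by norm_num) (fun p => by ring) 0 1 (by norm_num) (fun p => by ring)
      (fun c hc => ⟨pt c 0, ⟨hc, ⟨le_refl 0, zero_le_one⟩⟩, rfl⟩)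
      (fun c hc => ⟨pt 0 c, ⟨⟨le_refl 0, zero_le_one⟩, hc⟩, rfl⟩)
      I hI
  · intro J hJ
    exact core a b hab hbar hsum hL 1 0 (fun x => by rw [pt_norm_sq]; ring)
      (fun x => max_comm _ _) 0 1 (by norm_num) (fun p => by ring)
      1 0 (by norm_num) (fun p => by ring)
      (fun c hc => ⟨pt 0 c, ⟨⟨le_refl 0, zero_le_one⟩, hc⟩, rfl⟩)
      (fun c hc => ⟨pt c 0, ⟨hc, ⟨le_refl 0, zero_le_one⟩⟩, rfl⟩)
      J hJ
end
end
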